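/- Let (r,s) be one of (4,4), (4,2p), or (2p,4), where p is an odd prime. Then for every nontrivial normal subgroup L of G⁺(r,s), the normal quotient Γ⁺(r,s)_L either has at most 2 vertices or is isomorphic to a cycle graph C_m for some m ≥ 3; moreover the normal quotient of Γ⁺(r,s) by ⟨ν²⟩ is isomorphic to the cycle C_r and the normal quotient by ⟨μ²⟩ is isomorphic to the cycle C_s. In particular, (Γ⁺(r,s), G⁺(r,s)) is basic of cycle type. -/

import Mathlib

open SimpleGraph

namespace OG4

variable {V : Type*} {W : Type*}

/-! ### Normal quotients, cycles, and basic pairs -/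

/-- The setoid of orbits of a group `N` of permutations of `V`. -/
def orbitSetoid (N : Subgroup (Equiv.Perm V)) : Setoid V := MulAction.orbitRel N V

/-- The (normal) quotient graph of a graph `Γ` with respect to a group `N` of permutations:
its vertices are the `N`-orbits, two distinct orbits being adjacent iff some vertex of one is
adjacent in `Γ` to some vertex of the other. -/
def quotientGraph (Γ : SimpleGraph V) (N : Subgroup (Equiv.Perm V)) :
    SimpleGraph (Quotient (orbitSetoid N)) :=
  SimpleGraph.fromRel fun a b =>
    ∃ x y : V, Quotient.mk (orbitSetoid N) x = a ∧ Quotient.mk (orbitSetoid N) y = b ∧ Γ.Adj x y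

/-- `N` is a normal subgroup of the subgroup `G` (of some ambient group). -/
def NormalIn {G : Type*} [Group G] (N H : Subgroup G) : Prop :=
  N ≤ H ∧ ∀ h ∈ H, ∀ n ∈ N, h * n * h⁻¹ ∈ N

/-- A graph is isomorphic to a cycle graph `C_m` for some `m ≥ 3`. -/
def IsoCycle (Δ : SimpleGraph W) : Prop :=
  ∃ m : ℕ, 3 ≤ m ∧ Nonempty (Δ ≃g SimpleGraph.cycleGraph m)

/-- Every normal quotient of `(Γ, G)` relative to a nontrivial normal subgroup is degenerate:
it has at most 2 vertices or is a cycle. -/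
def IsBasic (Γ : SimpleGraph V) (G : Subgroup (Equiv.Perm V)) : Prop :=
  ∀ N : Subgroup (Equiv.Perm V), NormalIn N G → N ≠ ⊥ →
    Nat.card (Quotient (orbitSetoid N)) ≤ 2 ∨ IsoCycle (quotientGraph Γ N)

/-- `(Γ, G)` is basic of cycle type. -/
def BasicOfCycleType (Γ : SimpleGraph V) (G : Subgroup (Equiv.Perm V)) : Prop :=
  IsBasic Γ G ∧
    ∃ N : Subgroup (Equiv.Perm V), NormalIn N G ∧ N ≠ ⊥ ∧ IsoCycle (quotientGraph Γ N)

/-- The kernel of the action of `G` on the set of `N`-orbits. -/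
def orbitKernel (G N : Subgroup (Equiv.Perm V)) : Subgroup (Equiv.Perm V) where
  carrier := {g | g ∈ G ∧ ∀ x : V,
    Quotient.mk (orbitSetoid N) (g x) = Quotient.mk (orbitSetoid N) x}
  one_mem' := ⟨G.one_mem, fun x => by simp⟩
  mul_mem' := by
    rintro a b ⟨haG, ha⟩ ⟨hbG, hb⟩
    refine ⟨G.mul_mem haG hbG, fun x => ?_⟩
    rw [Equiv.Perm.mul_apply, ha (b x), hb x]
  inv_mem' := by
    rintro a ⟨haG, ha⟩
    refine ⟨G.inv_mem haG, fun x => ?_⟩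
    have h := ha (a⁻¹ x)
    rw [show a (a⁻¹ x) = x from by simp] at h
    exact h.symm

/-- `(Γ, G)` has a pair of independent cyclic normal quotients. -/
def HasIndepCyclicQuotients (Γ : SimpleGraph V) (G : Subgroup (Equiv.Perm V)) : Prop :=
  ∃ N M : Subgroup (Equiv.Perm V), NormalIn N G ∧ NormalIn M G ∧
    IsoCycle (quotientGraph Γ N) ∧ IsoCycle (quotientGraph Γ M) ∧
    ¬ IsoCycle (quotientGraph Γ (orbitKernel G N ⊓ orbitKernel G M))

/-- `(Γ, G)` is basic of independent-cycle type. -/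
def BasicOfIndependentCycleType (Γ : SimpleGraph V) (G : Subgroup (Equiv.Perm V)) : Prop :=
  IsBasic Γ G ∧ HasIndepCyclicQuotients Γ G

/-- Isomorphism of graph-group pairs: a graph isomorphism conjugating one group onto the other. -/
def PairIso (Γ : SimpleGraph V) (G : Subgroup (Equiv.Perm V))
    (Δ : SimpleGraph W) (H : Subgroup (Equiv.Perm W)) : Prop :=
  ∃ e : Γ ≃g Δ, ∀ h : Equiv.Perm W, h ∈ H ↔ ∃ g ∈ G, e.toEquiv.permCongr g = h

/-! ### Minimal normal subgroups -/

/-- `M` is a minimal normal subgroup of the ambient group. -/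
def IsMinimalNormal {G : Type*} [Group G] (M : Subgroup G) : Prop :=
  M.Normal ∧ M ≠ ⊥ ∧ ∀ N : Subgroup G, N.Normal → N ≤ M → N = ⊥ ∨ N = M

/-- `M` is a minimal normal subgroup of the subgroup `H`. -/
def IsMinimalNormalIn {G : Type*} [Group G] (M H : Subgroup G) : Prop :=
  NormalIn M H ∧ M ≠ ⊥ ∧ ∀ N : Subgroup G, NormalIn N H → N ≤ M → N = ⊥ ∨ N = M

/-! ### The graphs `Γ(r,s)` and their automorphisms -/

/-- In `Γ(r,s)`, the vertex `(i,j)` is joined to the four vertices `(i ± 1, j ± 1)`. -/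
def gammaRel (r s : ℕ) (x y : ZMod r × ZMod s) : Prop :=
  (y.1 = x.1 + 1 ∨ y.1 = x.1 - 1) ∧ (y.2 = x.2 + 1 ∨ y.2 = x.2 - 1)

/-- The graph `Γ(r,s)` on `ℤ_r × ℤ_s`. -/
def Gamma (r s : ℕ) : SimpleGraph (ZMod r × ZMod s) := SimpleGraph.fromRel (gammaRel r s)

/-- `μ : (i,j) ↦ (i+1, j)`. -/
def mu (r s : ℕ) : Equiv.Perm (ZMod r × ZMod s) :=
  (Equiv.addRight (1 : ZMod r)).prodCongr (Equiv.refl (ZMod s))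

/-- `ν : (i,j) ↦ (i, j+1)`. -/
def nu (r s : ℕ) : Equiv.Perm (ZMod r × ZMod s) :=
  (Equiv.refl (ZMod r)).prodCongr (Equiv.addRight (1 : ZMod s))

/-- `σ : (i,j) ↦ (-i, j)`. -/
def sigma (r s : ℕ) : Equiv.Perm (ZMod r × ZMod s) :=
  (Equiv.neg (ZMod r)).prodCongr (Equiv.refl (ZMod s))

/-- `τ : (i,j) ↦ (-i, -j)`. -/
def tau (r s : ℕ) : Equiv.Perm (ZMod r × ZMod s) :=
  (Equiv.neg (ZMod r)).prodCongr (Equiv.neg (ZMod s))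

/-- `σν : (i,j) ↦ (-i, j+1)`. -/
def sigmaNu (r s : ℕ) : Equiv.Perm (ZMod r × ZMod s) :=
  (Equiv.neg (ZMod r)).prodCongr (Equiv.addRight (1 : ZMod s))

/-- `μν : (i,j) ↦ (i+1, j+1)`. -/
def muNu (r s : ℕ) : Equiv.Perm (ZMod r × ZMod s) :=
  (Equiv.addRight (1 : ZMod r)).prodCongr (Equiv.addRight (1 : ZMod s))

/-- `σμν : (i,j) ↦ (-(i+1), j+1)`. -/
def sigmaMuNu (r s : ℕ) : Equiv.Perm (ZMod r × ZMod s) :=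
  ((Equiv.addRight (1 : ZMod r)).trans (Equiv.neg (ZMod r))).prodCongr
    (Equiv.addRight (1 : ZMod s))

/-- `μ² : (i,j) ↦ (i+2, j)`. -/
def muSq (r s : ℕ) : Equiv.Perm (ZMod r × ZMod s) :=
  (Equiv.addRight (2 : ZMod r)).prodCongr (Equiv.refl (ZMod s))

/-- `ν² : (i,j) ↦ (i, j+2)`. -/
def nuSq (r s : ℕ) : Equiv.Perm (ZMod r × ZMod s) :=
  (Equiv.refl (ZMod r)).prodCongr (Equiv.addRight (2 : ZMod s))

/-- `μ^k : (i,j) ↦ (i+k, j)`. -/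
def muPow (r s k : ℕ) : Equiv.Perm (ZMod r × ZMod s) :=
  (Equiv.addRight ((k : ZMod r))).prodCongr (Equiv.refl (ZMod s))

/-- `μ^k ν² : (i,j) ↦ (i+k, j+2)`. -/
def muPowNuSq (r s k : ℕ) : Equiv.Perm (ZMod r × ZMod s) :=
  (Equiv.addRight ((k : ZMod r))).prodCongr (Equiv.addRight (2 : ZMod s))

/-- `G(r,s) = ⟨μ, ν, σ⟩`. -/
def Ggroup (r s : ℕ) : Subgroup (Equiv.Perm (ZMod r × ZMod s)) :=
  Subgroup.closure {mu r s, nu r s, sigma r s}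

/-- `H(r,s) = ⟨μ, σν, τ⟩`. -/
def Hgroup (r s : ℕ) : Subgroup (Equiv.Perm (ZMod r × ZMod s)) :=
  Subgroup.closure {mu r s, sigmaNu r s, tau r s}

/-! ### The graphs `Γ⁺(r,s)` (for `r`, `s` even) -/

/-- `X⁺`: the set of `(i,j)` with `i` and `j` of the same parity. -/
def XPlus (r s : ℕ) : Set (ZMod r × ZMod s) := {x | x.1.val % 2 = x.2.val % 2}

/-- `Γ⁺(r,s)`, the subgraph of `Γ(r,s)` induced on `X⁺`. -/
def GammaPlus (r s : ℕ) : SimpleGraph (XPlus r s) :=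
  SimpleGraph.induce (XPlus r s) (Gamma r s)

section parity

lemma val_add_one_mod_two (r : ℕ) (hr : 2 ∣ r) (hr0 : r ≠ 0) (i : ZMod r) :
    (i + 1).val % 2 = (i.val + 1) % 2 := by
  haveI : NeZero r := ⟨hr0⟩
  haveI : Fact (1 < r) := ⟨by have := Nat.le_of_dvd (Nat.pos_of_ne_zero hr0) hr; omega⟩
  rw [ZMod.val_add, Nat.mod_mod_of_dvd _ hr, ZMod.val_one]

lemma val_add_two_mod_two (r : ℕ) (hr : 2 ∣ r) (hr0 : r ≠ 0) (i : ZMod r) :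
    (i + 2).val % 2 = i.val % 2 := by
  have h1 := val_add_one_mod_two r hr hr0 i
  have h2 := val_add_one_mod_two r hr hr0 (i + 1)
  rw [show i + 1 + 1 = i + 2 by ring] at h2
  omega

lemma val_neg_mod_two (r : ℕ) (hr : 2 ∣ r) (hr0 : r ≠ 0) (i : ZMod r) :
    (-i).val % 2 = i.val % 2 := by
  haveI : NeZero r := ⟨hr0⟩
  rcases eq_or_ne i 0 with h | h
  · simp [h]
  · have h1 : (-i).val = r - i.val := by rw [ZMod.neg_val]; simp [h]
    have h2 : i.val < r := ZMod.val_lt i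
    have h3 : i.val ≠ 0 := fun hh => h ((ZMod.val_eq_zero i).mp hh)
    obtain ⟨t, rfl⟩ := hr
    rw [h1]
    omega

end parity

section plusPerms

variable (r s : ℕ)

/-- The restriction of `μ²` to `X⁺`. -/
def muSqP (hr : 2 ∣ r) (hr0 : r ≠ 0) : Equiv.Perm (XPlus r s) :=
  (muSq r s).subtypePerm (by
    intro x
    have h := val_add_two_mod_two r hr hr0 x.1
    simp only [XPlus, Set.mem_setOf_eq, muSq, Equiv.prodCongr_apply, Prod.map,
      Equiv.coe_addRight, Equiv.refl_apply]
    omega)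

/-- The restriction of `ν²` to `X⁺`. -/
def nuSqP (hs : 2 ∣ s) (hs0 : s ≠ 0) : Equiv.Perm (XPlus r s) :=
  (nuSq r s).subtypePerm (by
    intro x
    have h := val_add_two_mod_two s hs hs0 x.2
    simp only [XPlus, Set.mem_setOf_eq, nuSq, Equiv.prodCongr_apply, Prod.map,
      Equiv.coe_addRight, Equiv.refl_apply]
    omega)

/-- The restriction of `μν` to `X⁺`. -/
def muNuP (hr : 2 ∣ r) (hr0 : r ≠ 0) (hs : 2 ∣ s) (hs0 : s ≠ 0) : Equiv.Perm (XPlus r s) :=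
  (muNu r s).subtypePerm (by
    intro x
    have h1 := val_add_one_mod_two r hr hr0 x.1
    have h2 := val_add_one_mod_two s hs hs0 x.2
    simp only [XPlus, Set.mem_setOf_eq, muNu, Equiv.prodCongr_apply, Prod.map,
      Equiv.coe_addRight]
    omega)

/-- The restriction of `σ` to `X⁺`. -/
def sigmaP (hr : 2 ∣ r) (hr0 : r ≠ 0) : Equiv.Perm (XPlus r s) :=
  (sigma r s).subtypePerm (by
    intro x
    have h := val_neg_mod_two r hr hr0 x.1
    simp only [XPlus, Set.mem_setOf_eq, sigma, Equiv.prodCongr_apply, Prod.map,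
      Equiv.neg_apply, Equiv.refl_apply]
    omega)

/-- The restriction of `τ` to `X⁺`. -/
def tauP (hr : 2 ∣ r) (hr0 : r ≠ 0) (hs : 2 ∣ s) (hs0 : s ≠ 0) : Equiv.Perm (XPlus r s) :=
  (tau r s).subtypePerm (by
    intro x
    have h1 := val_neg_mod_two r hr hr0 x.1
    have h2 := val_neg_mod_two s hs hs0 x.2
    simp only [XPlus, Set.mem_setOf_eq, tau, Equiv.prodCongr_apply, Prod.map,
      Equiv.neg_apply]
    omega)

/-- The restriction of `σμν` to `X⁺`. -/
def sigmaMuNuP (hr : 2 ∣ r) (hr0 : r ≠ 0) (hs : 2 ∣ s) (hs0 : s ≠ 0) :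
    Equiv.Perm (XPlus r s) :=
  (sigmaMuNu r s).subtypePerm (by
    intro x
    have h1 := val_neg_mod_two r hr hr0 (x.1 + 1)
    have h2 := val_add_one_mod_two r hr hr0 x.1
    have h3 := val_add_one_mod_two s hs hs0 x.2
    simp only [XPlus, Set.mem_setOf_eq, sigmaMuNu, Equiv.prodCongr_apply, Prod.map,
      Equiv.trans_apply, Equiv.coe_addRight, Equiv.neg_apply]
    omega)

/-- `G⁺(r,s) = ⟨μ², μν, σ⟩` acting on `X⁺`. -/
def GPlusGroup (hr : 2 ∣ r) (hr0 : r ≠ 0) (hs : 2 ∣ s) (hs0 : s ≠ 0) :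
    Subgroup (Equiv.Perm (XPlus r s)) :=
  Subgroup.closure {muSqP r s hr hr0, muNuP r s hr hr0 hs hs0, sigmaP r s hr hr0}

/-- `H⁺(r,s) = ⟨μ², σμν, τ⟩` acting on `X⁺`. -/
def HPlusGroup (hr : 2 ∣ r) (hr0 : r ≠ 0) (hs : 2 ∣ s) (hs0 : s ≠ 0) :
    Subgroup (Equiv.Perm (XPlus r s)) :=
  Subgroup.closure
    {muSqP r s hr hr0, sigmaMuNuP r s hr hr0 hs hs0, tauP r s hr hr0 hs hs0}

end plusPerms

/-! ### The standard double cover `Γ₂(r,s)` -/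

/-- Adjacency of the double cover: `(i,j)_δ ~ (i ± 1, j ± 1)_{δ+1}`. -/
def gamma2Rel (r s : ℕ) (x y : (ZMod r × ZMod s) × ZMod 2) : Prop :=
  (y.1.1 = x.1.1 + 1 ∨ y.1.1 = x.1.1 - 1) ∧ (y.1.2 = x.1.2 + 1 ∨ y.1.2 = x.1.2 - 1) ∧
    y.2 = x.2 + 1

/-- `Γ₂(r,s)`, the standard double cover of `Γ(r,s)`. -/
def Gamma2 (r s : ℕ) : SimpleGraph ((ZMod r × ZMod s) × ZMod 2) :=
  SimpleGraph.fromRel (gamma2Rel r s)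

/-- `μ : (i,j)_δ ↦ (i+1, j)_δ` on the double cover. -/
def muD (r s : ℕ) : Equiv.Perm ((ZMod r × ZMod s) × ZMod 2) :=
  (mu r s).prodCongr (Equiv.refl (ZMod 2))

/-- `ν : (i,j)_δ ↦ (i, j+1)_δ` on the double cover. -/
def nuD (r s : ℕ) : Equiv.Perm ((ZMod r × ZMod s) × ZMod 2) :=
  (nu r s).prodCongr (Equiv.refl (ZMod 2))

/-- `σ : (i,j)_δ ↦ (i, -j)_{δ+1}` on the double cover. -/
def sigmaD (r s : ℕ) : Equiv.Perm ((ZMod r × ZMod s) × ZMod 2) :=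
  ((Equiv.refl (ZMod r)).prodCongr (Equiv.neg (ZMod s))).prodCongr
    (Equiv.addRight (1 : ZMod 2))

/-- `τ : (i,j)_δ ↦ (-i, -j)_δ` on the double cover. -/
def tauD (r s : ℕ) : Equiv.Perm ((ZMod r × ZMod s) × ZMod 2) :=
  (tau r s).prodCongr (Equiv.refl (ZMod 2))

/-- `G₂(r,s) = ⟨μ, ν, σ, τ⟩` on the double cover. -/
def G2group (r s : ℕ) : Subgroup (Equiv.Perm ((ZMod r × ZMod s) × ZMod 2)) :=
  Subgroup.closure {muD r s, nuD r s, sigmaD r s, tauD r s}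



/-! ### Auxiliary machinery -/

section Aux

variable {r s : ℕ}

lemma mem_XPlus_iff {v : ZMod r × ZMod s} : v ∈ XPlus r s ↔ v.1.val % 2 = v.2.val % 2 :=
  Iff.rfl

lemma muSqP_apply (hre : 2 ∣ r) (hr0 : r ≠ 0) (x : XPlus r s) :
    ((muSqP r s hre hr0 x : ZMod r × ZMod s)) = ((x : ZMod r × ZMod s).1 + 2, (x : ZMod r × ZMod s).2) := rfl

lemma nuSqP_apply (hse : 2 ∣ s) (hs0 : s ≠ 0) (x : XPlus r s) :
    ((nuSqP r s hse hs0 x : ZMod r × ZMod s)) = ((x : ZMod r × ZMod s).1, (x : ZMod r × ZMod s).2 + 2) := rfl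

lemma muNuP_apply (hre : 2 ∣ r) (hr0 : r ≠ 0) (hse : 2 ∣ s) (hs0 : s ≠ 0) (x : XPlus r s) :
    ((muNuP r s hre hr0 hse hs0 x : ZMod r × ZMod s)) =
      ((x : ZMod r × ZMod s).1 + 1, (x : ZMod r × ZMod s).2 + 1) := rfl

lemma sigmaP_apply (hre : 2 ∣ r) (hr0 : r ≠ 0) (x : XPlus r s) :
    ((sigmaP r s hre hr0 x : ZMod r × ZMod s)) = (-(x : ZMod r × ZMod s).1, (x : ZMod r × ZMod s).2) := rfl

/-- All elements of `G⁺` are "affine": `(i,j) ↦ (ε i + a, j + b)` with `ε = ±1`. -/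
def AffP (r s : ℕ) (g : Equiv.Perm (XPlus r s)) : Prop :=
  ∃ ε a : ZMod r, ∃ b : ZMod s, (ε = 1 ∨ ε = -1) ∧
    ∀ x : XPlus r s, ((g x : ZMod r × ZMod s)) =
      (ε * (x : ZMod r × ZMod s).1 + a, (x : ZMod r × ZMod s).2 + b)

lemma affP_inv {g : Equiv.Perm (XPlus r s)} (hg : AffP r s g) : AffP r s g⁻¹ := by
  obtain ⟨ε, a, b, hε, h⟩ := hg
  have hε2 : ε * ε = 1 := by rcases hε with h1 | h1 <;> subst h1 <;> ring
  refine ⟨ε, -(ε * a), -b, hε, fun y => ?_⟩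
  have h2 := h (g⁻¹ y)
  rw [show g (g⁻¹ y) = y from by simp] at h2
  have h3 : (y : ZMod r × ZMod s).1 = ε * ((g⁻¹ y : XPlus r s) : ZMod r × ZMod s).1 + a :=
    congrArg Prod.fst h2
  have h4 : (y : ZMod r × ZMod s).2 = ((g⁻¹ y : XPlus r s) : ZMod r × ZMod s).2 + b :=
    congrArg Prod.snd h2
  have h5 : ((g⁻¹ y : XPlus r s) : ZMod r × ZMod s).1 = ε * (y : ZMod r × ZMod s).1 + -(ε * a) := by
    rw [h3]; rw [mul_add, ← mul_assoc, hε2]; ring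
  have h6 : ((g⁻¹ y : XPlus r s) : ZMod r × ZMod s).2 = (y : ZMod r × ZMod s).2 + -b := by
    rw [h4]; ring
  exact Prod.ext h5 h6

lemma affP_mul {g h : Equiv.Perm (XPlus r s)} (hg : AffP r s g) (hh : AffP r s h) :
    AffP r s (g * h) := by
  obtain ⟨ε, a, b, hε, hg'⟩ := hg
  obtain ⟨ε', a', b', hε', hh'⟩ := hh
  refine ⟨ε * ε', ε * a' + a, b' + b, ?_, fun x => ?_⟩
  · rcases hε with h1 | h1 <;> rcases hε' with h2 | h2 <;> subst h1 <;> subst h2 <;>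
      simp [mul_one, mul_neg, neg_neg]
  · have := hg' (h x)
    rw [Equiv.Perm.mul_apply, this, hh' x]
    exact Prod.ext (by dsimp; ring) (by dsimp; ring)

lemma affP_of_mem_GPlus (hre : 2 ∣ r) (hr0 : r ≠ 0) (hse : 2 ∣ s) (hs0 : s ≠ 0)
    {g : Equiv.Perm (XPlus r s)} (hg : g ∈ GPlusGroup r s hre hr0 hse hs0) : AffP r s g := by
  induction hg using Subgroup.closure_induction with
  | mem x hx =>
      rcases hx with h1 | h1 | h1 <;> subst h1
      · exact ⟨1, 2, 0, Or.inl rfl, fun x => by rw [muSqP_apply]; exact Prod.ext (by ring) (by ring)⟩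
      · exact ⟨1, 1, 1, Or.inl rfl, fun x => by rw [muNuP_apply]; exact Prod.ext (by ring) (by ring)⟩
      · exact ⟨-1, 0, 0, Or.inr rfl, fun x => by rw [sigmaP_apply]; exact Prod.ext (by ring) (by ring)⟩
  | one => exact ⟨1, 0, 0, Or.inl rfl, fun x => by simp⟩
  | mul x y hx hy hx' hy' => exact affP_mul hx' hy'
  | inv x hx hx' => exact affP_inv hx'

end Aux
section Generic

variable {V : Type*}

lemma orbit_mk_eq (L : Subgroup (Equiv.Perm V)) {g : Equiv.Perm V} (hg : g ∈ L) (x : V) :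
    Quotient.mk (orbitSetoid L) (g x) = Quotient.mk (orbitSetoid L) x :=
  Quot.sound (MulAction.orbitRel_apply.mpr ⟨⟨g, hg⟩, rfl⟩)

lemma exists_of_mk_eq (L : Subgroup (Equiv.Perm V)) {x y : V}
    (h : Quotient.mk (orbitSetoid L) x = Quotient.mk (orbitSetoid L) y) :
    ∃ g ∈ L, g y = x := by
  have h2 := Quotient.exact h
  obtain ⟨⟨g, hg⟩, hgy⟩ := MulAction.orbitRel_apply.mp h2
  exact ⟨g, hg, hgy⟩

variable (Γ : SimpleGraph V) (L : Subgroup (Equiv.Perm V)) {m : ℕ} (F : V → ZMod m)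

/-- The orbit-quotient equivalence induced by a complete invariant `F`. -/
noncomputable def quotInvEquiv
    (hfib : ∀ x y : V, F x = F y →
      Quotient.mk (orbitSetoid L) x = Quotient.mk (orbitSetoid L) y)
    (hinv : ∀ x y : V, Quotient.mk (orbitSetoid L) x = Quotient.mk (orbitSetoid L) y →
      F x = F y)
    (hsurj : Function.Surjective F) :
    Quotient (orbitSetoid L) ≃ ZMod m := by
  refine Equiv.ofBijective
    (Quotient.lift F (fun a b h => hinv a b (Quot.sound h))) ⟨?_, ?_⟩
  · refine fun A B => Quotient.inductionOn₂ A B (fun x y h => ?_)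
    exact hfib x y h
  · intro q
    obtain ⟨x, hx⟩ := hsurj q
    exact ⟨Quotient.mk _ x, hx⟩

lemma quotInvEquiv_mk (hfib hinv hsurj) (x : V) :
    quotInvEquiv L F hfib hinv hsurj (Quotient.mk (orbitSetoid L) x) = F x := rfl

lemma card_quot_eq
    (hfib : ∀ x y : V, F x = F y →
      Quotient.mk (orbitSetoid L) x = Quotient.mk (orbitSetoid L) y)
    (hinv : ∀ x y : V, Quotient.mk (orbitSetoid L) x = Quotient.mk (orbitSetoid L) y →
      F x = F y)
    (hsurj : Function.Surjective F) :
    Nat.card (Quotient (orbitSetoid L)) = m := by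
  rw [Nat.card_congr (quotInvEquiv L F hfib hinv hsurj), Nat.card_zmod]

/-- The main tool: a complete orbit invariant with cycle-like adjacency behaviour yields an
isomorphism of the quotient graph with a cycle graph. -/
lemma cycleQuotIso (hm : 3 ≤ m)
    (hfib : ∀ x y : V, F x = F y →
      Quotient.mk (orbitSetoid L) x = Quotient.mk (orbitSetoid L) y)
    (hinv : ∀ x y : V, Quotient.mk (orbitSetoid L) x = Quotient.mk (orbitSetoid L) y →
      F x = F y)
    (hadj : ∀ x y : V, Γ.Adj x y → F y = F x + 1 ∨ F y = F x - 1)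
    (hreal : ∀ q : ZMod m, ∃ x y : V, F x = q ∧ F y = q + 1 ∧ Γ.Adj x y) :
    Nonempty (quotientGraph Γ L ≃g SimpleGraph.cycleGraph m) := by
  obtain ⟨n, rfl⟩ : ∃ n, m = n + 2 := ⟨m - 2, by omega⟩
  have hsurj : Function.Surjective F := by
    intro q; obtain ⟨x, y, hx, -, -⟩ := hreal q; exact ⟨x, hx⟩
  let e := quotInvEquiv L F hfib hinv hsurj
  have key : ∀ A B : Quotient (orbitSetoid L),
      (quotientGraph Γ L).Adj A B ↔ (A ≠ B ∧ (e B = e A + 1 ∨ e B = e A - 1)) := by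
    intro A B
    rw [quotientGraph, SimpleGraph.fromRel_adj]
    constructor
    · rintro ⟨hne, ⟨x, y, hx, hy, hxy⟩ | ⟨x, y, hx, hy, hxy⟩⟩
      · refine ⟨hne, ?_⟩
        have := hadj x y hxy
        rw [← hx, ← hy]
        rw [quotInvEquiv_mk, quotInvEquiv_mk]
        tauto
      · refine ⟨hne, ?_⟩
        have h2 := hadj x y hxy
        rw [← hx, ← hy, quotInvEquiv_mk, quotInvEquiv_mk]
        rcases h2 with h2 | h2
        · right; rw [h2]; ring
        · left; rw [h2]; ring
    · rintro ⟨hne, hq | hq⟩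
      · obtain ⟨x, y, hx, hy, hxy⟩ := hreal (e A)
        refine ⟨hne, Or.inl ⟨x, y, ?_, ?_, hxy⟩⟩
        · apply e.injective; rw [quotInvEquiv_mk]; exact hx
        · apply e.injective; rw [quotInvEquiv_mk, hy, hq]
      · obtain ⟨x, y, hx, hy, hxy⟩ := hreal (e B)
        refine ⟨hne, Or.inr ⟨x, y, ?_, ?_, hxy⟩⟩
        · apply e.injective; rw [quotInvEquiv_mk]; exact hx
        · apply e.injective; rw [quotInvEquiv_mk, hy, hq]; ring
  refine ⟨⟨e.trans (Equiv.refl (Fin (n + 2))), ?_⟩⟩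
  intro A B
  rw [SimpleGraph.cycleGraph_adj, key A B]
  constructor
  · rintro (h1 | h1)
    · have hBA : e B = e A - 1 := by
        have : (e A : ZMod (n + 2)) - e B = 1 := h1
        rw [sub_eq_iff_eq_add] at this
        rw [this]; ring
      refine ⟨fun hAB => ?_, Or.inr hBA⟩
      · subst hAB
        rw [sub_self] at h1
        exact one_ne_zero h1.symm
    · have hBA : e B = e A + 1 := by
        have : (e B : ZMod (n + 2)) - e A = 1 := h1
        rw [sub_eq_iff_eq_add] at this
        rw [this]; ring
      refine ⟨fun hAB => ?_, Or.inl hBA⟩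
      · subst hAB
        rw [sub_self] at h1
        exact one_ne_zero h1.symm
  · rintro ⟨hne, h1 | h1⟩
    · right
      show (e B : ZMod (n + 2)) - e A = 1
      rw [h1]; ring
    · left
      show (e A : ZMod (n + 2)) - e B = 1
      rw [h1]; ring

end Generic
section XPlusAux

variable {r s : ℕ}

lemma one_ne_zero_zmod (hre : 2 ∣ r) (hr0 : r ≠ 0) : (1 : ZMod r) ≠ 0 := by
  intro h
  have : ((1 : ℕ) : ZMod r) = 0 := by exact_mod_cast h
  rw [ZMod.natCast_eq_zero_iff] at this
  have h1 := Nat.dvd_one.mp this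
  subst h1
  rcases hre with ⟨t, ht⟩
  omega

lemma val_add_mod_two (hre : 2 ∣ r) (hr0 : r ≠ 0) (u w : ZMod r) :
    (u + w).val % 2 = (u.val + w.val) % 2 := by
  haveI : NeZero r := ⟨hr0⟩
  rw [ZMod.val_add, Nat.mod_mod_of_dvd _ hre]

lemma exists_double (hre : 2 ∣ r) (hr0 : r ≠ 0) {u w : ZMod r}
    (h : u.val % 2 = w.val % 2) : ∃ k : ℕ, w + (k : ZMod r) * 2 = u := by
  haveI : NeZero r := ⟨hr0⟩
  set d := u - w with hd
  have hu : u = w + d := by rw [hd]; ring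
  have hpar : d.val % 2 = 0 := by
    have h2 := val_add_mod_two hre hr0 w d
    rw [← hu] at h2
    omega
  refine ⟨d.val / 2, ?_⟩
  have h3 : ((d.val / 2 : ℕ) : ZMod r) * 2 = ((2 * (d.val / 2) : ℕ) : ZMod r) := by
    push_cast; ring
  rw [h3, Nat.two_mul_div_two_of_even (Nat.even_iff.mpr hpar), ZMod.natCast_zmod_val, ← hu]

lemma gammaPlus_adj_iff {x y : XPlus r s} :
    (GammaPlus r s).Adj x y ↔ (x : ZMod r × ZMod s) ≠ (y : ZMod r × ZMod s) ∧
      ((y : ZMod r × ZMod s).1 = (x : ZMod r × ZMod s).1 + 1 ∨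
        (y : ZMod r × ZMod s).1 = (x : ZMod r × ZMod s).1 - 1) ∧
      ((y : ZMod r × ZMod s).2 = (x : ZMod r × ZMod s).2 + 1 ∨
        (y : ZMod r × ZMod s).2 = (x : ZMod r × ZMod s).2 - 1) := by
  show (Gamma r s).Adj (x : ZMod r × ZMod s) (y : ZMod r × ZMod s) ↔ _
  rw [Gamma, SimpleGraph.fromRel_adj]
  constructor
  · rintro ⟨hne, h | h⟩
    · exact ⟨hne, h.1, h.2⟩
    · obtain ⟨h1, h2⟩ := h
      refine ⟨hne, ?_, ?_⟩
      · rcases h1 with h1 | h1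
        · right; rw [h1]; ring
        · left; rw [h1]; ring
      · rcases h2 with h2 | h2
        · right; rw [h2]; ring
        · left; rw [h2]; ring
  · rintro ⟨hne, h1, h2⟩
    exact ⟨hne, Or.inl ⟨h1, h2⟩⟩

lemma stepPP_mem (hre : 2 ∣ r) (hr0 : r ≠ 0) (hse : 2 ∣ s) (hs0 : s ≠ 0) (x : XPlus r s) :
    ((x : ZMod r × ZMod s).1 + 1, (x : ZMod r × ZMod s).2 + 1) ∈ XPlus r s := by
  have h1 := val_add_one_mod_two r hre hr0 (x : ZMod r × ZMod s).1
  have h2 := val_add_one_mod_two s hse hs0 (x : ZMod r × ZMod s).2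
  have h3 := x.2
  rw [mem_XPlus_iff] at h3 ⊢
  dsimp at *
  omega

lemma stepPM_mem (hre : 2 ∣ r) (hr0 : r ≠ 0) (hse : 2 ∣ s) (hs0 : s ≠ 0) (x : XPlus r s) :
    ((x : ZMod r × ZMod s).1 + 1, (x : ZMod r × ZMod s).2 - 1) ∈ XPlus r s := by
  have h1 := val_add_one_mod_two r hre hr0 (x : ZMod r × ZMod s).1
  have h2 := val_add_one_mod_two s hse hs0 ((x : ZMod r × ZMod s).2 - 1)
  rw [sub_add_cancel] at h2
  have h3 := x.2
  rw [mem_XPlus_iff] at h3 ⊢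
  dsimp at *
  omega

lemma adj_stepPP (hre : 2 ∣ r) (hr0 : r ≠ 0) (hse : 2 ∣ s) (hs0 : s ≠ 0) (x : XPlus r s) :
    (GammaPlus r s).Adj x ⟨((x : ZMod r × ZMod s).1 + 1, (x : ZMod r × ZMod s).2 + 1),
      stepPP_mem hre hr0 hse hs0 x⟩ := by
  rw [gammaPlus_adj_iff]
  refine ⟨?_, Or.inl rfl, Or.inl rfl⟩
  intro h
  have h1 : (x : ZMod r × ZMod s).1 = (x : ZMod r × ZMod s).1 + 1 := congrArg Prod.fst h
  have := one_ne_zero_zmod hre hr0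
  apply this
  have := (left_eq_add (a := (x : ZMod r × ZMod s).1)).mp h1
  exact this

lemma adj_stepPM (hre : 2 ∣ r) (hr0 : r ≠ 0) (hse : 2 ∣ s) (hs0 : s ≠ 0) (x : XPlus r s) :
    (GammaPlus r s).Adj x ⟨((x : ZMod r × ZMod s).1 + 1, (x : ZMod r × ZMod s).2 - 1),
      stepPM_mem hre hr0 hse hs0 x⟩ := by
  rw [gammaPlus_adj_iff]
  refine ⟨?_, Or.inl rfl, Or.inr rfl⟩
  intro h
  have h1 : (x : ZMod r × ZMod s).1 = (x : ZMod r × ZMod s).1 + 1 := congrArg Prod.fst h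
  exact one_ne_zero_zmod hre hr0 ((left_eq_add (a := (x : ZMod r × ZMod s).1)).mp h1)

/-- Powers of a translation. -/
lemma transl_pow {a : ZMod r} {b : ZMod s} {h : Equiv.Perm (XPlus r s)}
    (hh : ∀ x : XPlus r s, ((h x : ZMod r × ZMod s)) =
      ((x : ZMod r × ZMod s).1 + a, (x : ZMod r × ZMod s).2 + b)) (k : ℕ) :
    ∀ x : XPlus r s, (((h ^ k) x : ZMod r × ZMod s)) =
      ((x : ZMod r × ZMod s).1 + (k : ZMod r) * a, (x : ZMod r × ZMod s).2 + (k : ZMod s) * b) := by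
  induction k with
  | zero => intro x; simp
  | succ n ih =>
      intro x
      rw [pow_succ', Equiv.Perm.mul_apply, hh ((h ^ n) x)]
      have h1 := congrArg Prod.fst (ih x)
      have h2 := congrArg Prod.snd (ih x)
      dsimp at h1 h2
      rw [Prod.ext_iff]
      constructor
      · show ((h ^ n) x : ZMod r × ZMod s).1 + a = _
        rw [h1]; push_cast; ring
      · show ((h ^ n) x : ZMod r × ZMod s).2 + b = _
        rw [h2]; push_cast; ring

end XPlusAux
section CastVal

variable {m s : ℕ} [NeZero s]

lemma castval_add (hdvd : m ∣ s) (u v : ZMod s) :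
    ((((u + v).val : ℕ)) : ZMod m) = ((u.val : ℕ) : ZMod m) + ((v.val : ℕ) : ZMod m) := by
  rw [ZMod.val_add]
  have h1 : (u.val + v.val) % s ≡ u.val + v.val [MOD m] :=
    (Nat.mod_modEq (u.val + v.val) s).of_dvd hdvd
  rw [(ZMod.natCast_eq_natCast_iff _ _ _).mpr h1]
  push_cast
  ring

lemma castval_neg (hdvd : m ∣ s) (u : ZMod s) :
    ((((-u).val : ℕ)) : ZMod m) = -((u.val : ℕ) : ZMod m) := by
  have h1 := castval_add (m := m) hdvd u (-u)
  rw [add_neg_cancel, ZMod.val_zero] at h1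
  have h2 : (0 : ZMod m) = ((u.val : ℕ) : ZMod m) + (((-u).val : ℕ) : ZMod m) := by
    exact_mod_cast h1
  linear_combination -h2

lemma castval_sub (hdvd : m ∣ s) (u v : ZMod s) :
    ((((u - v).val : ℕ)) : ZMod m) = ((u.val : ℕ) : ZMod m) - ((v.val : ℕ) : ZMod m) := by
  rw [sub_eq_add_neg, castval_add hdvd, castval_neg hdvd]
  ring

lemma castval_add_one (hdvd : m ∣ s) (hs1 : 1 < s) (u : ZMod s) :
    ((((u + 1).val : ℕ)) : ZMod m) = ((u.val : ℕ) : ZMod m) + 1 := by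
  haveI : Fact (1 < s) := ⟨hs1⟩
  rw [castval_add hdvd, ZMod.val_one]
  push_cast
  ring

lemma castval_sub_one (hdvd : m ∣ s) (hs1 : 1 < s) (u : ZMod s) :
    ((((u - 1).val : ℕ)) : ZMod m) = ((u.val : ℕ) : ZMod m) - 1 := by
  haveI : Fact (1 < s) := ⟨hs1⟩
  rw [castval_sub hdvd, ZMod.val_one]
  push_cast
  ring

end CastVal
section LemmaJ

lemma lemmaJ (r s : ℕ) (hre : 2 ∣ r) (hr0 : r ≠ 0) (hse : 2 ∣ s) (hs0 : s ≠ 0)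
    (L : Subgroup (Equiv.Perm (XPlus r s)))
    (hb : ∀ g ∈ L, ∃ b : ZMod s, ∀ x : XPlus r s,
      ((g x : XPlus r s) : ZMod r × ZMod s).2 = (x : ZMod r × ZMod s).2 + b)
    (h20 : ∃ h ∈ L, ∀ x : XPlus r s, ((h x : XPlus r s) : ZMod r × ZMod s) =
      ((x : ZMod r × ZMod s).1 + 2, (x : ZMod r × ZMod s).2)) :
    Nat.card (Quotient (orbitSetoid L)) ≤ 2 ∨
      IsoCycle (quotientGraph (GammaPlus r s) L) := by
  classical
  haveI : NeZero s := ⟨hs0⟩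
  haveI : NeZero r := ⟨hr0⟩
  have hs2 : 2 ≤ s := Nat.le_of_dvd (Nat.pos_of_ne_zero hs0) hse
  set Bm : ZMod s → Prop := fun u => ∃ g ∈ L, ∀ x : XPlus r s,
    ((g x : XPlus r s) : ZMod r × ZMod s).2 = (x : ZMod r × ZMod s).2 + u with hBm
  have hB0 : Bm 0 := ⟨1, L.one_mem, fun x => by simp⟩
  have hBadd : ∀ {u v : ZMod s}, Bm u → Bm v → Bm (u + v) := by
    rintro u v ⟨g, hg, hgx⟩ ⟨g', hg', hgx'⟩
    refine ⟨g * g', L.mul_mem hg hg', fun x => ?_⟩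
    rw [Equiv.Perm.mul_apply, hgx (g' x), hgx' x]; ring
  have hBneg : ∀ {u : ZMod s}, Bm u → Bm (-u) := by
    rintro u ⟨g, hg, hgx⟩
    refine ⟨g⁻¹, L.inv_mem hg, fun y => ?_⟩
    have h1 := hgx (g⁻¹ y)
    rw [show g (g⁻¹ y) = y from by simp] at h1
    rw [h1]; ring
  have hBnsmul : ∀ (k : ℕ) {u : ZMod s}, Bm u → Bm ((k : ZMod s) * u) := by
    intro k
    induction k with
    | zero => intro u hu; simpa using hB0
    | succ n ih =>
        intro u hu
        have h1 : (((n + 1 : ℕ)) : ZMod s) * u = (n : ZMod s) * u + u := by push_cast; ring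
        rw [h1]; exact hBadd (ih hu) hu
  have hex : ∃ b : ℕ, 0 < b ∧ Bm ((b : ℕ) : ZMod s) :=
    ⟨s, Nat.pos_of_ne_zero hs0, by rw [ZMod.natCast_self]; exact hB0⟩
  set m := Nat.find hex with hm
  obtain ⟨hm0, hmB⟩ := Nat.find_spec hex
  haveI : NeZero m := ⟨hm0.ne'⟩
  have hms : m ≤ s := Nat.find_min' hex ⟨Nat.pos_of_ne_zero hs0,
    by rw [ZMod.natCast_self]; exact hB0⟩
  have hdvd : m ∣ s := by
    have h1 : Bm ((s % m : ℕ) : ZMod s) := by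
      have h3 : ((s % m : ℕ) : ZMod s) =
          0 + -(((s / m : ℕ) : ZMod s) * ((m : ℕ) : ZMod s)) := by
        have h4 : (m * (s / m) + s % m : ℕ) = s := Nat.div_add_mod s m
        have h5 : ((m * (s / m) + s % m : ℕ) : ZMod s) = 0 := by rw [h4, ZMod.natCast_self]
        push_cast at h5 ⊢
        linear_combination h5
      rw [h3]
      exact hBadd hB0 (hBneg (hBnsmul _ hmB))
    by_contra hnd
    have h6 : 0 < s % m := Nat.pos_of_ne_zero fun h => hnd (Nat.dvd_of_mod_eq_zero h)
    exact Nat.find_min hex (Nat.mod_lt s hm0) ⟨h6, h1⟩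
  have hkey : ∀ u : ZMod s, Bm u ↔ ((u.val : ℕ) : ZMod m) = 0 := by
    intro u
    constructor
    · intro hu
      have h1 : Bm ((u.val % m : ℕ) : ZMod s) := by
        have h2 : ((u.val % m : ℕ) : ZMod s) =
            u + -(((u.val / m : ℕ) : ZMod s) * ((m : ℕ) : ZMod s)) := by
          have h4 : (m * (u.val / m) + u.val % m : ℕ) = u.val := Nat.div_add_mod u.val m
          have h5 : ((m * (u.val / m) + u.val % m : ℕ) : ZMod s) = u := by
            rw [h4]; exact ZMod.natCast_zmod_val u
          push_cast at h5 ⊢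
          linear_combination h5
        rw [h2]
        exact hBadd hu (hBneg (hBnsmul _ hmB))
      by_contra hne
      have h6 : 0 < u.val % m := by
        rcases Nat.eq_zero_or_pos (u.val % m) with h7 | h7
        · exact absurd (by rw [ZMod.natCast_eq_zero_iff]
                           exact Nat.dvd_of_mod_eq_zero h7) hne
        · exact h7
      exact Nat.find_min hex (Nat.mod_lt _ hm0) ⟨h6, h1⟩
    · intro hu
      rw [ZMod.natCast_eq_zero_iff] at hu
      obtain ⟨k, hk⟩ := hu
      have h1 : u = ((k : ℕ) : ZMod s) * ((m : ℕ) : ZMod s) := by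
        rw [← ZMod.natCast_zmod_val u, hk]; push_cast; ring
      rw [h1]
      exact hBnsmul _ hmB
  set F : XPlus r s → ZMod m := fun x => (((x : ZMod r × ZMod s).2.val : ℕ) : ZMod m) with hF
  have hinv : ∀ x y : XPlus r s,
      Quotient.mk (orbitSetoid L) x = Quotient.mk (orbitSetoid L) y → F x = F y := by
    intro x y hxy
    obtain ⟨g, hg, hgyx⟩ := exists_of_mk_eq L hxy
    obtain ⟨b, hbg⟩ := hb g hg
    have hbB : ((b.val : ℕ) : ZMod m) = 0 := (hkey b).mp ⟨g, hg, hbg⟩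
    have h1 : (x : ZMod r × ZMod s).2 = (y : ZMod r × ZMod s).2 + b := by
      rw [← hgyx]; exact hbg y
    show (((x : ZMod r × ZMod s).2.val : ℕ) : ZMod m) = (((y : ZMod r × ZMod s).2.val : ℕ) : ZMod m)
    rw [h1, castval_add hdvd, hbB, add_zero]
  have hfib : ∀ x y : XPlus r s, F x = F y →
      Quotient.mk (orbitSetoid L) x = Quotient.mk (orbitSetoid L) y := by
    intro x y hFxy
    have hsub : Bm ((x : ZMod r × ZMod s).2 - (y : ZMod r × ZMod s).2) := by
      rw [hkey, castval_sub hdvd]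
      have hx' : F x = (((x : ZMod r × ZMod s).2.val : ℕ) : ZMod m) := rfl
      have hy' : F y = (((y : ZMod r × ZMod s).2.val : ℕ) : ZMod m) := rfl
      rw [← hx', ← hy', hFxy, sub_self]
    obtain ⟨g, hg, hgx⟩ := hsub
    have hz2 : ((g y : XPlus r s) : ZMod r × ZMod s).2 = (x : ZMod r × ZMod s).2 := by
      rw [hgx y]; ring
    have hpar : ((g y : XPlus r s) : ZMod r × ZMod s).1.val % 2
        = (x : ZMod r × ZMod s).1.val % 2 := by
      have p1 := (g y).2
      have p2 := x.2
      rw [mem_XPlus_iff] at p1 p2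
      rw [p1, p2, hz2]
    obtain ⟨k, hk⟩ := exists_double hre hr0 hpar.symm
    obtain ⟨hp, hpL, hpx⟩ := h20
    have hPow := transl_pow (a := (2 : ZMod r)) (b := (0 : ZMod s)) (h := hp)
      (fun x => by rw [hpx x]; exact Prod.ext (by dsimp) (by dsimp; ring)) k
    have hfin : ((hp ^ k) * g) y = x := by
      apply Subtype.ext
      rw [Equiv.Perm.mul_apply, hPow (g y)]
      have e1 : ((g y : XPlus r s) : ZMod r × ZMod s).1 + (k : ZMod r) * 2
          = (x : ZMod r × ZMod s).1 := hk
      have e2 : ((g y : XPlus r s) : ZMod r × ZMod s).2 + (k : ZMod s) * 0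
          = (x : ZMod r × ZMod s).2 := by rw [hz2]; ring
      exact Prod.ext e1 e2
    rw [← hfin]
    exact orbit_mk_eq L (L.mul_mem (L.pow_mem hpL k) hg) y
  have hFsurj : ∀ q : ZMod m, ∃ x : XPlus r s, F x = q ∧
      (x : ZMod r × ZMod s) = ((q.val : ZMod r), (q.val : ZMod s)) := by
    intro q
    have hmem : (((q.val : ℕ) : ZMod r), ((q.val : ℕ) : ZMod s)) ∈ XPlus r s := by
      rw [mem_XPlus_iff]
      dsimp
      rw [ZMod.val_natCast, ZMod.val_natCast, Nat.mod_mod_of_dvd _ hre, Nat.mod_mod_of_dvd _ hse]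
    refine ⟨⟨_, hmem⟩, ?_, rfl⟩
    show ((((q.val : ℕ) : ZMod s)).val : ZMod m) = q
    rw [ZMod.val_natCast]
    have h1 : (q.val % s : ℕ) ≡ q.val [MOD m] := (Nat.mod_modEq q.val s).of_dvd hdvd
    rw [(ZMod.natCast_eq_natCast_iff _ _ _).mpr h1, ZMod.natCast_zmod_val]
  rcases le_or_gt m 2 with hm2 | hm2
  · left
    have hsurj : Function.Surjective F := fun q => by
      obtain ⟨x, hx, -⟩ := hFsurj q; exact ⟨x, hx⟩
    rw [card_quot_eq L F hfib hinv hsurj]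
    exact hm2
  · right
    refine ⟨m, hm2, cycleQuotIso (GammaPlus r s) L F hm2 hfib hinv ?_ ?_⟩
    · intro x y hxy
      rw [gammaPlus_adj_iff] at hxy
      obtain ⟨-, -, h2⟩ := hxy
      rcases h2 with h2 | h2
      · left
        show (((y : ZMod r × ZMod s).2.val : ℕ) : ZMod m) = _
        rw [h2, castval_add_one hdvd (by omega)]
      · right
        show (((y : ZMod r × ZMod s).2.val : ℕ) : ZMod m) = _
        rw [h2, castval_sub_one hdvd (by omega)]
    · intro q
      obtain ⟨x, hFx, hxco⟩ := hFsurj q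
      refine ⟨x, ⟨((x : ZMod r × ZMod s).1 + 1, (x : ZMod r × ZMod s).2 + 1),
        stepPP_mem hre hr0 hse hs0 x⟩, hFx, ?_, adj_stepPP hre hr0 hse hs0 x⟩
      show ((((x : ZMod r × ZMod s).2 + 1).val : ℕ) : ZMod m) = q + 1
      rw [castval_add_one hdvd (by omega)]
      exact congrArg (· + 1) hFx
  done

end LemmaJ
section LemmaI

lemma lemmaI (r s : ℕ) (hre : 2 ∣ r) (hr0 : r ≠ 0) (hse : 2 ∣ s) (hs0 : s ≠ 0)
    (L : Subgroup (Equiv.Perm (XPlus r s)))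
    (hb : ∀ g ∈ L, ∃ a : ZMod r, ∀ x : XPlus r s,
      ((g x : XPlus r s) : ZMod r × ZMod s).1 = (x : ZMod r × ZMod s).1 + a)
    (h02 : ∃ h ∈ L, ∀ x : XPlus r s, ((h x : XPlus r s) : ZMod r × ZMod s) =
      ((x : ZMod r × ZMod s).1, (x : ZMod r × ZMod s).2 + 2)) :
    Nat.card (Quotient (orbitSetoid L)) ≤ 2 ∨
      IsoCycle (quotientGraph (GammaPlus r s) L) := by
  classical
  haveI : NeZero s := ⟨hs0⟩
  haveI : NeZero r := ⟨hr0⟩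
  have hr2 : 2 ≤ r := Nat.le_of_dvd (Nat.pos_of_ne_zero hr0) hre
  set Bm : ZMod r → Prop := fun u => ∃ g ∈ L, ∀ x : XPlus r s,
    ((g x : XPlus r s) : ZMod r × ZMod s).1 = (x : ZMod r × ZMod s).1 + u with hBm
  have hB0 : Bm 0 := ⟨1, L.one_mem, fun x => by simp⟩
  have hBadd : ∀ {u v : ZMod r}, Bm u → Bm v → Bm (u + v) := by
    rintro u v ⟨g, hg, hgx⟩ ⟨g', hg', hgx'⟩
    refine ⟨g * g', L.mul_mem hg hg', fun x => ?_⟩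
    rw [Equiv.Perm.mul_apply, hgx (g' x), hgx' x]; ring
  have hBneg : ∀ {u : ZMod r}, Bm u → Bm (-u) := by
    rintro u ⟨g, hg, hgx⟩
    refine ⟨g⁻¹, L.inv_mem hg, fun y => ?_⟩
    have h1 := hgx (g⁻¹ y)
    rw [show g (g⁻¹ y) = y from by simp] at h1
    rw [h1]; ring
  have hBnsmul : ∀ (k : ℕ) {u : ZMod r}, Bm u → Bm ((k : ZMod r) * u) := by
    intro k
    induction k with
    | zero => intro u hu; simpa using hB0
    | succ n ih =>
        intro u hu
        have h1 : (((n + 1 : ℕ)) : ZMod r) * u = (n : ZMod r) * u + u := by push_cast; ring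
        rw [h1]; exact hBadd (ih hu) hu
  have hex : ∃ b : ℕ, 0 < b ∧ Bm ((b : ℕ) : ZMod r) :=
    ⟨r, Nat.pos_of_ne_zero hr0, by rw [ZMod.natCast_self]; exact hB0⟩
  set m := Nat.find hex with hm
  obtain ⟨hm0, hmB⟩ := Nat.find_spec hex
  haveI : NeZero m := ⟨hm0.ne'⟩
  have hdvd : m ∣ r := by
    have h1 : Bm ((r % m : ℕ) : ZMod r) := by
      have h3 : ((r % m : ℕ) : ZMod r) =
          0 + -(((r / m : ℕ) : ZMod r) * ((m : ℕ) : ZMod r)) := by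
        have h4 : (m * (r / m) + r % m : ℕ) = r := Nat.div_add_mod r m
        have h5 : ((m * (r / m) + r % m : ℕ) : ZMod r) = 0 := by rw [h4, ZMod.natCast_self]
        push_cast at h5 ⊢
        linear_combination h5
      rw [h3]
      exact hBadd hB0 (hBneg (hBnsmul _ hmB))
    by_contra hnd
    have h6 : 0 < r % m := Nat.pos_of_ne_zero fun h => hnd (Nat.dvd_of_mod_eq_zero h)
    exact Nat.find_min hex (Nat.mod_lt r hm0) ⟨h6, h1⟩
  have hkey : ∀ u : ZMod r, Bm u ↔ ((u.val : ℕ) : ZMod m) = 0 := by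
    intro u
    constructor
    · intro hu
      have h1 : Bm ((u.val % m : ℕ) : ZMod r) := by
        have h2 : ((u.val % m : ℕ) : ZMod r) =
            u + -(((u.val / m : ℕ) : ZMod r) * ((m : ℕ) : ZMod r)) := by
          have h4 : (m * (u.val / m) + u.val % m : ℕ) = u.val := Nat.div_add_mod u.val m
          have h5 : ((m * (u.val / m) + u.val % m : ℕ) : ZMod r) = u := by
            rw [h4]; exact ZMod.natCast_zmod_val u
          push_cast at h5 ⊢
          linear_combination h5
        rw [h2]
        exact hBadd hu (hBneg (hBnsmul _ hmB))
      by_contra hne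
      have h6 : 0 < u.val % m := by
        rcases Nat.eq_zero_or_pos (u.val % m) with h7 | h7
        · exact absurd (by rw [ZMod.natCast_eq_zero_iff]
                           exact Nat.dvd_of_mod_eq_zero h7) hne
        · exact h7
      exact Nat.find_min hex (Nat.mod_lt _ hm0) ⟨h6, h1⟩
    · intro hu
      rw [ZMod.natCast_eq_zero_iff] at hu
      obtain ⟨k, hk⟩ := hu
      have h1 : u = ((k : ℕ) : ZMod r) * ((m : ℕ) : ZMod r) := by
        rw [← ZMod.natCast_zmod_val u, hk]; push_cast; ring
      rw [h1]
      exact hBnsmul _ hmB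
  set F : XPlus r s → ZMod m := fun x => (((x : ZMod r × ZMod s).1.val : ℕ) : ZMod m) with hF
  have hinv : ∀ x y : XPlus r s,
      Quotient.mk (orbitSetoid L) x = Quotient.mk (orbitSetoid L) y → F x = F y := by
    intro x y hxy
    obtain ⟨g, hg, hgyx⟩ := exists_of_mk_eq L hxy
    obtain ⟨b, hbg⟩ := hb g hg
    have hbB : ((b.val : ℕ) : ZMod m) = 0 := (hkey b).mp ⟨g, hg, hbg⟩
    have h1 : (x : ZMod r × ZMod s).1 = (y : ZMod r × ZMod s).1 + b := by
      rw [← hgyx]; exact hbg y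
    show (((x : ZMod r × ZMod s).1.val : ℕ) : ZMod m) = (((y : ZMod r × ZMod s).1.val : ℕ) : ZMod m)
    rw [h1, castval_add hdvd, hbB, add_zero]
  have hfib : ∀ x y : XPlus r s, F x = F y →
      Quotient.mk (orbitSetoid L) x = Quotient.mk (orbitSetoid L) y := by
    intro x y hFxy
    have hsub : Bm ((x : ZMod r × ZMod s).1 - (y : ZMod r × ZMod s).1) := by
      rw [hkey, castval_sub hdvd]
      have hx' : F x = (((x : ZMod r × ZMod s).1.val : ℕ) : ZMod m) := rfl
      have hy' : F y = (((y : ZMod r × ZMod s).1.val : ℕ) : ZMod m) := rfl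
      rw [← hx', ← hy', hFxy, sub_self]
    obtain ⟨g, hg, hgx⟩ := hsub
    have hz1 : ((g y : XPlus r s) : ZMod r × ZMod s).1 = (x : ZMod r × ZMod s).1 := by
      rw [hgx y]; ring
    have hpar : ((g y : XPlus r s) : ZMod r × ZMod s).2.val % 2
        = (x : ZMod r × ZMod s).2.val % 2 := by
      have p1 := (g y).2
      have p2 := x.2
      rw [mem_XPlus_iff] at p1 p2
      rw [← p1, ← p2, hz1]
    obtain ⟨k, hk⟩ := exists_double hse hs0 hpar.symm
    obtain ⟨hp, hpL, hpx⟩ := h02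
    have hPow := transl_pow (a := (0 : ZMod r)) (b := (2 : ZMod s)) (h := hp)
      (fun x => by rw [hpx x]; exact Prod.ext (by dsimp; ring) (by dsimp)) k
    have hfin : ((hp ^ k) * g) y = x := by
      apply Subtype.ext
      rw [Equiv.Perm.mul_apply, hPow (g y)]
      have e2 : ((g y : XPlus r s) : ZMod r × ZMod s).2 + (k : ZMod s) * 2
          = (x : ZMod r × ZMod s).2 := hk
      have e1 : ((g y : XPlus r s) : ZMod r × ZMod s).1 + (k : ZMod r) * 0
          = (x : ZMod r × ZMod s).1 := by rw [hz1]; ring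
      exact Prod.ext e1 e2
    rw [← hfin]
    exact orbit_mk_eq L (L.mul_mem (L.pow_mem hpL k) hg) y
  have hFsurj : ∀ q : ZMod m, ∃ x : XPlus r s, F x = q ∧
      (x : ZMod r × ZMod s) = ((q.val : ZMod r), (q.val : ZMod s)) := by
    intro q
    have hmem : (((q.val : ℕ) : ZMod r), ((q.val : ℕ) : ZMod s)) ∈ XPlus r s := by
      rw [mem_XPlus_iff]
      dsimp
      rw [ZMod.val_natCast, ZMod.val_natCast, Nat.mod_mod_of_dvd _ hre, Nat.mod_mod_of_dvd _ hse]
    refine ⟨⟨_, hmem⟩, ?_, rfl⟩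
    show ((((q.val : ℕ) : ZMod r)).val : ZMod m) = q
    rw [ZMod.val_natCast]
    have h1 : (q.val % r : ℕ) ≡ q.val [MOD m] := (Nat.mod_modEq q.val r).of_dvd hdvd
    rw [(ZMod.natCast_eq_natCast_iff _ _ _).mpr h1, ZMod.natCast_zmod_val]
  rcases le_or_gt m 2 with hm2 | hm2
  · left
    have hsurj : Function.Surjective F := fun q => by
      obtain ⟨x, hx, -⟩ := hFsurj q; exact ⟨x, hx⟩
    rw [card_quot_eq L F hfib hinv hsurj]
    exact hm2
  · right
    refine ⟨m, hm2, cycleQuotIso (GammaPlus r s) L F hm2 hfib hinv ?_ ?_⟩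
    · intro x y hxy
      rw [gammaPlus_adj_iff] at hxy
      obtain ⟨-, h2, -⟩ := hxy
      rcases h2 with h2 | h2
      · left
        show (((y : ZMod r × ZMod s).1.val : ℕ) : ZMod m) = _
        rw [h2, castval_add_one hdvd (by omega)]
      · right
        show (((y : ZMod r × ZMod s).1.val : ℕ) : ZMod m) = _
        rw [h2, castval_sub_one hdvd (by omega)]
    · intro q
      obtain ⟨x, hFx, hxco⟩ := hFsurj q
      refine ⟨x, ⟨((x : ZMod r × ZMod s).1 + 1, (x : ZMod r × ZMod s).2 + 1),
        stepPP_mem hre hr0 hse hs0 x⟩, hFx, ?_, adj_stepPP hre hr0 hse hs0 x⟩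
      show ((((x : ZMod r × ZMod s).1 + 1).val : ℕ) : ZMod m) = q + 1
      rw [castval_add_one hdvd (by omega)]
      exact congrArg (· + 1) hFx

end LemmaI
section ExplicitQuots

lemma nuSq_quot_iso (r s : ℕ) (hre : 2 ∣ r) (hr0 : r ≠ 0) (hse : 2 ∣ s) (hs0 : s ≠ 0)
    (hr3 : 3 ≤ r) :
    Nonempty (quotientGraph (GammaPlus r s) (Subgroup.closure {nuSqP r s hse hs0}) ≃g
      SimpleGraph.cycleGraph r) := by
  classical
  haveI : NeZero s := ⟨hs0⟩
  haveI : NeZero r := ⟨hr0⟩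
  set L := Subgroup.closure {nuSqP r s hse hs0} with hL
  set F : XPlus r s → ZMod r := fun x => (x : ZMod r × ZMod s).1 with hF
  have hinv : ∀ x y : XPlus r s,
      Quotient.mk (orbitSetoid L) x = Quotient.mk (orbitSetoid L) y → F x = F y := by
    intro x y hxy
    obtain ⟨g, hg, hgyx⟩ := exists_of_mk_eq L hxy
    have hfst : ∀ g ∈ L, ∀ x : XPlus r s,
        ((g x : XPlus r s) : ZMod r × ZMod s).1 = (x : ZMod r × ZMod s).1 := by
      intro g hg
      induction hg using Subgroup.closure_induction with
      | mem z hz =>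
          rcases hz with rfl
          intro x
          rw [nuSqP_apply]
      | one => intro x; simp
      | mul a b ha hb ha' hb' => intro x; rw [Equiv.Perm.mul_apply, ha' (b x), hb' x]
      | inv a ha ha' =>
          intro y
          have h1 := ha' (a⁻¹ y)
          rw [show a (a⁻¹ y) = y from by simp] at h1
          exact h1.symm
    show F x = F y
    rw [← hgyx]
    exact hfst g hg y
  have hfib : ∀ x y : XPlus r s, F x = F y →
      Quotient.mk (orbitSetoid L) x = Quotient.mk (orbitSetoid L) y := by
    intro x y hFxy
    have hpar : (x : ZMod r × ZMod s).2.val % 2 = (y : ZMod r × ZMod s).2.val % 2 := by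
      have p1 := x.2
      have p2 := y.2
      rw [mem_XPlus_iff] at p1 p2
      have : (x : ZMod r × ZMod s).1 = (y : ZMod r × ZMod s).1 := hFxy
      rw [← p1, ← p2, this]
    obtain ⟨k, hk⟩ := exists_double hse hs0 hpar
    have hnu : ∀ z : XPlus r s, ((nuSqP r s hse hs0 z : XPlus r s) : ZMod r × ZMod s) =
        ((z : ZMod r × ZMod s).1 + 0, (z : ZMod r × ZMod s).2 + 2) := by
      intro z
      rw [nuSqP_apply]
      exact Prod.ext (by dsimp; ring) (by dsimp)
    have hPow := transl_pow (a := (0 : ZMod r)) (b := (2 : ZMod s)) hnu k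
    have hfin : ((nuSqP r s hse hs0) ^ k) y = x := by
      apply Subtype.ext
      rw [hPow y]
      exact Prod.ext (by dsimp; rw [mul_zero, add_zero]; exact hFxy.symm) hk
    rw [← hfin]
    exact orbit_mk_eq L (L.pow_mem (Subgroup.subset_closure rfl) k) y
  have hadj : ∀ x y : XPlus r s, (GammaPlus r s).Adj x y → F y = F x + 1 ∨ F y = F x - 1 := by
    intro x y hxy
    rw [gammaPlus_adj_iff] at hxy
    exact hxy.2.1
  have hreal : ∀ q : ZMod r, ∃ x y : XPlus r s, F x = q ∧ F y = q + 1 ∧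
      (GammaPlus r s).Adj x y := by
    intro q
    have hmem : ((q, ((q.val : ℕ) : ZMod s)) : ZMod r × ZMod s) ∈ XPlus r s := by
      rw [mem_XPlus_iff]
      dsimp
      rw [ZMod.val_natCast, Nat.mod_mod_of_dvd _ hse]
    refine ⟨⟨_, hmem⟩, ⟨(q + 1, ((q.val : ℕ) : ZMod s) + 1),
      stepPP_mem hre hr0 hse hs0 ⟨_, hmem⟩⟩, rfl, rfl, adj_stepPP hre hr0 hse hs0 _⟩
  exact cycleQuotIso (GammaPlus r s) L F hr3 hfib hinv hadj hreal

end ExplicitQuots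
section ExplicitQuots2

lemma muSq_quot_iso (r s : ℕ) (hre : 2 ∣ r) (hr0 : r ≠ 0) (hse : 2 ∣ s) (hs0 : s ≠ 0)
    (hs3 : 3 ≤ s) :
    Nonempty (quotientGraph (GammaPlus r s) (Subgroup.closure {muSqP r s hre hr0}) ≃g
      SimpleGraph.cycleGraph s) := by
  classical
  haveI : NeZero s := ⟨hs0⟩
  haveI : NeZero r := ⟨hr0⟩
  set L := Subgroup.closure {muSqP r s hre hr0} with hL
  set F : XPlus r s → ZMod s := fun x => (x : ZMod r × ZMod s).2 with hF
  have hinv : ∀ x y : XPlus r s,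
      Quotient.mk (orbitSetoid L) x = Quotient.mk (orbitSetoid L) y → F x = F y := by
    intro x y hxy
    obtain ⟨g, hg, hgyx⟩ := exists_of_mk_eq L hxy
    have hfst : ∀ g ∈ L, ∀ x : XPlus r s,
        ((g x : XPlus r s) : ZMod r × ZMod s).2 = (x : ZMod r × ZMod s).2 := by
      intro g hg
      induction hg using Subgroup.closure_induction with
      | mem z hz =>
          rcases hz with rfl
          intro x
          rw [muSqP_apply]
      | one => intro x; simp
      | mul a b ha hb ha' hb' => intro x; rw [Equiv.Perm.mul_apply, ha' (b x), hb' x]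
      | inv a ha ha' =>
          intro y
          have h1 := ha' (a⁻¹ y)
          rw [show a (a⁻¹ y) = y from by simp] at h1
          exact h1.symm
    show F x = F y
    rw [← hgyx]
    exact hfst g hg y
  have hfib : ∀ x y : XPlus r s, F x = F y →
      Quotient.mk (orbitSetoid L) x = Quotient.mk (orbitSetoid L) y := by
    intro x y hFxy
    have hpar : (x : ZMod r × ZMod s).1.val % 2 = (y : ZMod r × ZMod s).1.val % 2 := by
      have p1 := x.2
      have p2 := y.2
      rw [mem_XPlus_iff] at p1 p2
      have : (x : ZMod r × ZMod s).2 = (y : ZMod r × ZMod s).2 := hFxy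
      rw [p1, p2, this]
    obtain ⟨k, hk⟩ := exists_double hre hr0 hpar
    have hmu : ∀ z : XPlus r s, ((muSqP r s hre hr0 z : XPlus r s) : ZMod r × ZMod s) =
        ((z : ZMod r × ZMod s).1 + 2, (z : ZMod r × ZMod s).2 + 0) := by
      intro z
      rw [muSqP_apply]
      exact Prod.ext (by dsimp) (by dsimp; ring)
    have hPow := transl_pow (a := (2 : ZMod r)) (b := (0 : ZMod s)) hmu k
    have hfin : ((muSqP r s hre hr0) ^ k) y = x := by
      apply Subtype.ext
      rw [hPow y]
      exact Prod.ext hk (by dsimp; rw [mul_zero, add_zero]; exact hFxy.symm)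
    rw [← hfin]
    exact orbit_mk_eq L (L.pow_mem (Subgroup.subset_closure rfl) k) y
  have hadj : ∀ x y : XPlus r s, (GammaPlus r s).Adj x y → F y = F x + 1 ∨ F y = F x - 1 := by
    intro x y hxy
    rw [gammaPlus_adj_iff] at hxy
    exact hxy.2.2
  have hreal : ∀ q : ZMod s, ∃ x y : XPlus r s, F x = q ∧ F y = q + 1 ∧
      (GammaPlus r s).Adj x y := by
    intro q
    have hmem : ((((q.val : ℕ) : ZMod r), q) : ZMod r × ZMod s) ∈ XPlus r s := by
      rw [mem_XPlus_iff]
      dsimp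
      rw [ZMod.val_natCast, Nat.mod_mod_of_dvd _ hre]
    refine ⟨⟨_, hmem⟩, ⟨(((q.val : ℕ) : ZMod r) + 1, q + 1),
      stepPP_mem hre hr0 hse hs0 ⟨_, hmem⟩⟩, rfl, rfl, adj_stepPP hre hr0 hse hs0 _⟩
  exact cycleQuotIso (GammaPlus r s) L F hs3 hfib hinv hadj hreal

end ExplicitQuots2
section GroupFacts

variable {r s : ℕ}

lemma perm_ext_coord {g h : Equiv.Perm (XPlus r s)}
    (H : ∀ x : XPlus r s, ((g x : XPlus r s) : ZMod r × ZMod s) =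
      ((h x : XPlus r s) : ZMod r × ZMod s)) : g = h := by
  apply Equiv.ext
  intro x
  exact Subtype.ext (H x)

lemma nuSqP_mem (hre : 2 ∣ r) (hr0 : r ≠ 0) (hse : 2 ∣ s) (hs0 : s ≠ 0) :
    nuSqP r s hse hs0 ∈ GPlusGroup r s hre hr0 hse hs0 := by
  have hkey : nuSqP r s hse hs0 * muSqP r s hre hr0 =
      (muNuP r s hre hr0 hse hs0) ^ 2 := by
    apply perm_ext_coord
    intro x
    rw [Equiv.Perm.mul_apply, pow_two, Equiv.Perm.mul_apply,
      nuSqP_apply, muSqP_apply, muNuP_apply, muNuP_apply]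
    exact Prod.ext (by dsimp; ring) (by dsimp; ring)
  have h2 : nuSqP r s hse hs0 = (muNuP r s hre hr0 hse hs0) ^ 2 * (muSqP r s hre hr0)⁻¹ := by
    rw [← hkey]; group
  rw [h2]
  exact Subgroup.mul_mem _ (Subgroup.pow_mem _ (Subgroup.subset_closure (by simp)) 2)
    (Subgroup.inv_mem _ (Subgroup.subset_closure (by simp)))

lemma muSqP_mem (hre : 2 ∣ r) (hr0 : r ≠ 0) (hse : 2 ∣ s) (hs0 : s ≠ 0) :
    muSqP r s hre hr0 ∈ GPlusGroup r s hre hr0 hse hs0 :=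
  Subgroup.subset_closure (by simp)

lemma muNuP_mem (hre : 2 ∣ r) (hr0 : r ≠ 0) (hse : 2 ∣ s) (hs0 : s ≠ 0) :
    muNuP r s hre hr0 hse hs0 ∈ GPlusGroup r s hre hr0 hse hs0 :=
  Subgroup.subset_closure (by simp)

lemma sigmaP_mem (hre : 2 ∣ r) (hr0 : r ≠ 0) (hse : 2 ∣ s) (hs0 : s ≠ 0) :
    sigmaP r s hre hr0 ∈ GPlusGroup r s hre hr0 hse hs0 :=
  Subgroup.subset_closure (by simp)

lemma nuSq_normalIn (hre : 2 ∣ r) (hr0 : r ≠ 0) (hse : 2 ∣ s) (hs0 : s ≠ 0) :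
    NormalIn (Subgroup.closure {nuSqP r s hse hs0}) (GPlusGroup r s hre hr0 hse hs0) := by
  constructor
  · rw [Subgroup.closure_le]
    intro z hz
    rcases hz with rfl
    exact nuSqP_mem hre hr0 hse hs0
  · intro h hh n hn
    have hcomm : h * nuSqP r s hse hs0 * h⁻¹ = nuSqP r s hse hs0 := by
      obtain ⟨ε, a, b, hε, hf⟩ := affP_of_mem_GPlus hre hr0 hse hs0 hh
      have : h * nuSqP r s hse hs0 = nuSqP r s hse hs0 * h := by
        apply perm_ext_coord
        intro x
        rw [Equiv.Perm.mul_apply, Equiv.Perm.mul_apply, hf (nuSqP r s hse hs0 x),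
          nuSqP_apply, nuSqP_apply, hf x]
        exact Prod.ext (by dsimp) (by dsimp; ring)
      rw [this, mul_inv_cancel_right]
    induction hn using Subgroup.closure_induction with
    | mem z hz =>
        rcases hz with rfl
        rw [hcomm]
        exact Subgroup.subset_closure rfl
    | one => simpa using Subgroup.one_mem _
    | mul a b ha hb ha' hb' =>
        have : h * (a * b) * h⁻¹ = (h * a * h⁻¹) * (h * b * h⁻¹) := by group
        rw [this]
        exact Subgroup.mul_mem _ ha' hb'
    | inv a ha ha' =>
        have : h * a⁻¹ * h⁻¹ = (h * a * h⁻¹)⁻¹ := by group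
        rw [this]
        exact Subgroup.inv_mem _ ha'

lemma muSq_normalIn (hre : 2 ∣ r) (hr0 : r ≠ 0) (hse : 2 ∣ s) (hs0 : s ≠ 0) :
    NormalIn (Subgroup.closure {muSqP r s hre hr0}) (GPlusGroup r s hre hr0 hse hs0) := by
  constructor
  · rw [Subgroup.closure_le]
    intro z hz
    rcases hz with rfl
    exact muSqP_mem hre hr0 hse hs0
  · intro h hh n hn
    have hconj : h * muSqP r s hre hr0 * h⁻¹ ∈ Subgroup.closure {muSqP r s hre hr0} := by
      obtain ⟨ε, a, b, hε, hf⟩ := affP_of_mem_GPlus hre hr0 hse hs0 hh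
      rcases hε with hε | hε
      · have : h * muSqP r s hre hr0 = muSqP r s hre hr0 * h := by
          apply perm_ext_coord
          intro x
          rw [Equiv.Perm.mul_apply, Equiv.Perm.mul_apply, hf (muSqP r s hre hr0 x),
            muSqP_apply, muSqP_apply, hf x]
          subst hε
          exact Prod.ext (by dsimp; ring) (by dsimp)
        rw [this, mul_inv_cancel_right]
        exact Subgroup.subset_closure rfl
      · have hA : muSqP r s hre hr0 * h * muSqP r s hre hr0 = h := by
          apply perm_ext_coord
          intro x
          rw [Equiv.Perm.mul_apply, Equiv.Perm.mul_apply, muSqP_apply,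
            hf (muSqP r s hre hr0 x), muSqP_apply, hf x]
          subst hε
          exact Prod.ext (by dsimp; ring) (by dsimp)
        have : h * muSqP r s hre hr0 * h⁻¹ = (muSqP r s hre hr0)⁻¹ := by
          apply mul_left_cancel (a := muSqP r s hre hr0)
          rw [← mul_assoc, ← mul_assoc, hA, mul_inv_cancel, mul_inv_cancel]
        rw [this]
        exact Subgroup.inv_mem _ (Subgroup.subset_closure rfl)
    induction hn using Subgroup.closure_induction with
    | mem z hz =>
        rcases hz with rfl
        exact hconj
    | one => simpa using Subgroup.one_mem _
    | mul a b ha hb ha' hb' =>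
        have : h * (a * b) * h⁻¹ = (h * a * h⁻¹) * (h * b * h⁻¹) := by group
        rw [this]
        exact Subgroup.mul_mem _ ha' hb'
    | inv a ha ha' =>
        have : h * a⁻¹ * h⁻¹ = (h * a * h⁻¹)⁻¹ := by group
        rw [this]
        exact Subgroup.inv_mem _ ha'

lemma two_ne_zero_zmod {n : ℕ} (h3 : 3 ≤ n) : (2 : ZMod n) ≠ 0 := by
  intro h
  have h1 : ((2 : ℕ) : ZMod n) = 0 := by exact_mod_cast h
  rw [ZMod.natCast_eq_zero_iff] at h1
  have := Nat.le_of_dvd (by omega) h1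
  omega

lemma nuSq_ne_bot (hre : 2 ∣ r) (hr0 : r ≠ 0) (hse : 2 ∣ s) (hs0 : s ≠ 0) (hs3 : 3 ≤ s) :
    Subgroup.closure {nuSqP r s hse hs0} ≠ ⊥ := by
  intro hbot
  have h1 : nuSqP r s hse hs0 ∈ Subgroup.closure {nuSqP r s hse hs0} :=
    Subgroup.subset_closure rfl
  rw [hbot, Subgroup.mem_bot] at h1
  have hmem0 : ((0, 0) : ZMod r × ZMod s) ∈ XPlus r s := by
    rw [mem_XPlus_iff]; simp
  have h2 := congrArg (fun g : Equiv.Perm (XPlus r s) => ((g ⟨(0,0), hmem0⟩ : XPlus r s) :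
    ZMod r × ZMod s).2) h1
  dsimp at h2
  rw [nuSqP_apply] at h2
  dsimp at h2
  rw [zero_add] at h2
  exact two_ne_zero_zmod hs3 h2
end GroupFacts
section Arith

lemma zmod4_two_mul (a : ZMod 4) : 2 * a = 0 ∨ 2 * a = 2 := by revert a; decide

lemma zmod4_of_two_mul_zero (a : ZMod 4) (h : 2 * a = 0) : a = 0 ∨ a = 2 := by
  revert a; decide

lemma zmod4_val_even (a : ZMod 4) (h : a = 0 ∨ a = 2) : a.val % 2 = 0 := by
  rcases h with rfl | rfl <;> decide

lemma mul2_eq_zero_iff (p : ℕ) (hp : 0 < p) (b : ZMod (2 * p)) :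
    2 * b = 0 ↔ p ∣ b.val := by
  haveI : NeZero (2 * p) := ⟨by omega⟩
  constructor
  · intro h
    have h1 : ((2 * b.val : ℕ) : ZMod (2 * p)) = 0 := by
      push_cast
      rw [ZMod.natCast_zmod_val]
      exact h
    rw [ZMod.natCast_eq_zero_iff] at h1
    exact (mul_dvd_mul_iff_left (two_ne_zero)).mp h1
  · intro h
    obtain ⟨k, hk⟩ := h
    have h1 : (2 * b.val : ℕ) = 2 * p * k := by rw [hk]; ring
    have h2 : ((2 * b.val : ℕ) : ZMod (2 * p)) = 0 := by
      rw [h1]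
      have h0 : ((2 * p : ℕ) : ZMod (2 * p)) = 0 := ZMod.natCast_self _
      calc ((2 * p * k : ℕ) : ZMod (2 * p))
          = ((2 * p : ℕ) : ZMod (2 * p)) * ((k : ℕ) : ZMod (2 * p)) := by push_cast; ring
        _ = 0 := by rw [h0, zero_mul]
    push_cast at h2
    rw [ZMod.natCast_zmod_val] at h2
    exact h2

lemma zmod2p_val_cases (p : ℕ) (hp : 0 < p) (b : ZMod (2 * p)) (h : 2 * b = 0) :
    b = 0 ∨ b.val = p := by
  haveI : NeZero (2 * p) := ⟨by omega⟩
  have h1 := (mul2_eq_zero_iff p hp b).mp h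
  have h2 : b.val < 2 * p := ZMod.val_lt b
  obtain ⟨k, hk⟩ := h1
  have hk2 : k < 2 := by
    by_contra hcon
    push_neg at hcon
    have : p * 2 ≤ p * k := Nat.mul_le_mul_left p hcon
    omega
  interval_cases k
  · left
    have : b.val = 0 := by omega
    exact (ZMod.val_eq_zero b).mp this
  · right; omega

lemma exists_mul_eq_two (p : ℕ) (hp : p.Prime) (b : ZMod (2 * p)) (hb : 2 * b ≠ 0) :
    ∃ k : ℕ, (k : ZMod (2 * p)) * (2 * b) = 2 := by
  haveI : NeZero (2 * p) := ⟨by have := hp.pos; omega⟩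
  haveI : Fact p.Prime := ⟨hp⟩
  haveI : NeZero p := ⟨hp.pos.ne'⟩
  have hpd : ¬ p ∣ b.val := fun h => hb ((mul2_eq_zero_iff p hp.pos b).mpr h)
  have hc : ((b.val : ℕ) : ZMod p) ≠ 0 :=
    fun h => hpd ((ZMod.natCast_eq_zero_iff _ _).mp h)
  set k := (((b.val : ℕ) : ZMod p))⁻¹.val with hk
  have h1 : ((b.val : ℕ) : ZMod p) * (((b.val : ℕ) : ZMod p))⁻¹ = 1 := mul_inv_cancel₀ hc
  have h2 : ((b.val * k : ℕ) : ZMod p) = ((1 : ℕ) : ZMod p) := by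
    push_cast
    rw [ZMod.natCast_zmod_val]
    exact_mod_cast h1
  rw [ZMod.natCast_eq_natCast_iff] at h2
  have h3 : (b.val * k) % p = 1 % p := h2
  have hp2 : 2 ≤ p := hp.two_le
  have h4 : 1 % p = 1 := Nat.mod_eq_of_lt (by omega)
  -- b.val * k = p * q + 1
  have h5 : b.val * k = p * (b.val * k / p) + 1 := by
    have := Nat.div_add_mod (b.val * k) p
    omega
  refine ⟨k, ?_⟩
  have h6 : (k : ZMod (2 * p)) * (2 * b) = ((2 * (b.val * k) : ℕ) : ZMod (2 * p)) := by
    push_cast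
    rw [ZMod.natCast_zmod_val]
    ring
  rw [h6, h5]
  have h7 : (2 * (p * (b.val * k / p) + 1) : ℕ) = 2 * p * (b.val * k / p) + 2 := by ring
  rw [h7]
  have h0 : ((2 * p : ℕ) : ZMod (2 * p)) = 0 := ZMod.natCast_self _
  calc ((2 * p * (b.val * k / p) + 2 : ℕ) : ZMod (2 * p))
      = ((2 * p : ℕ) : ZMod (2 * p)) * ((b.val * k / p : ℕ) : ZMod (2 * p)) + 2 := by
        push_cast; ring
    _ = 2 := by rw [h0, zero_mul, zero_add]

end Arith
section Klein44

instance decXPlus (r s : ℕ) : DecidablePred (· ∈ XPlus r s) := fun v =>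
  inferInstanceAs (Decidable (v.1.val % 2 = v.2.val % 2))

/-- The invariant used for the exceptional `(4,4)` quotient. -/
def F44 (x : XPlus 4 4) : ZMod 4 :=
  (x : ZMod 4 × ZMod 4).1 + 2 * (((x : ZMod 4 × ZMod 4).2.val / 2 : ℕ) : ZMod 4)

lemma klein44 (L : Subgroup (Equiv.Perm (XPlus 4 4)))
    (hex : ∃ h ∈ L, ∀ x : XPlus 4 4, ((h x : XPlus 4 4) : ZMod 4 × ZMod 4) =
      ((x : ZMod 4 × ZMod 4).1 + 2, (x : ZMod 4 × ZMod 4).2 + 2))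
    (hcl : ∀ g ∈ L, (∀ x : XPlus 4 4, ((g x : XPlus 4 4) : ZMod 4 × ZMod 4) =
        (x : ZMod 4 × ZMod 4)) ∨
      (∀ x : XPlus 4 4, ((g x : XPlus 4 4) : ZMod 4 × ZMod 4) =
        ((x : ZMod 4 × ZMod 4).1 + 2, (x : ZMod 4 × ZMod 4).2 + 2))) :
    IsoCycle (quotientGraph (GammaPlus 4 4) L) := by
  have hfib : ∀ x y : XPlus 4 4, F44 x = F44 y →
      Quotient.mk (orbitSetoid L) x = Quotient.mk (orbitSetoid L) y := by
    have hstep : ∀ x y : XPlus 4 4, F44 x = F44 y → (y = x ∨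
        ((y : ZMod 4 × ZMod 4) =
          ((x : ZMod 4 × ZMod 4).1 + 2, (x : ZMod 4 × ZMod 4).2 + 2))) := by decide
    intro x y hF
    rcases hstep x y hF with rfl | hy
    · rfl
    · obtain ⟨t, htL, htf⟩ := hex
      have h1 : t x = y := Subtype.ext (by rw [htf x, hy])
      rw [← h1]
      exact (orbit_mk_eq L htL x).symm
  have hinv : ∀ x y : XPlus 4 4,
      Quotient.mk (orbitSetoid L) x = Quotient.mk (orbitSetoid L) y → F44 x = F44 y := by
    have hstep : ∀ z w : XPlus 4 4, (w : ZMod 4 × ZMod 4) =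
        ((z : ZMod 4 × ZMod 4).1 + 2, (z : ZMod 4 × ZMod 4).2 + 2) → F44 w = F44 z := by decide
    intro x y hxy
    obtain ⟨g, hg, hgyx⟩ := exists_of_mk_eq L hxy
    rcases hcl g hg with hid | htr
    · have : g y = y := Subtype.ext (hid y)
      rw [this] at hgyx
      rw [hgyx]
    · have h1 : (x : ZMod 4 × ZMod 4) =
          ((y : ZMod 4 × ZMod 4).1 + 2, (y : ZMod 4 × ZMod 4).2 + 2) := by
        rw [← hgyx]; exact htr y
      exact hstep y x h1
  have hadj : ∀ x y : XPlus 4 4, (GammaPlus 4 4).Adj x y →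
      F44 y = F44 x + 1 ∨ F44 y = F44 x - 1 := by
    have hstep : ∀ x y : XPlus 4 4,
        (((y : ZMod 4 × ZMod 4).1 = (x : ZMod 4 × ZMod 4).1 + 1 ∨
          (y : ZMod 4 × ZMod 4).1 = (x : ZMod 4 × ZMod 4).1 - 1) ∧
         ((y : ZMod 4 × ZMod 4).2 = (x : ZMod 4 × ZMod 4).2 + 1 ∨
          (y : ZMod 4 × ZMod 4).2 = (x : ZMod 4 × ZMod 4).2 - 1)) →
        F44 y = F44 x + 1 ∨ F44 y = F44 x - 1 := by decide
    intro x y hxy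
    rw [gammaPlus_adj_iff] at hxy
    exact hstep x y hxy.2
  have hreal : ∀ q : ZMod 4, ∃ x y : XPlus 4 4, F44 x = q ∧ F44 y = q + 1 ∧
      (GammaPlus 4 4).Adj x y := by
    have hstep : ∀ q : ZMod 4, ∃ x y : XPlus 4 4, F44 x = q ∧ F44 y = q + 1 ∧
        ((x : ZMod 4 × ZMod 4) ≠ (y : ZMod 4 × ZMod 4) ∧
         ((y : ZMod 4 × ZMod 4).1 = (x : ZMod 4 × ZMod 4).1 + 1 ∨
          (y : ZMod 4 × ZMod 4).1 = (x : ZMod 4 × ZMod 4).1 - 1) ∧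
         ((y : ZMod 4 × ZMod 4).2 = (x : ZMod 4 × ZMod 4).2 + 1 ∨
          (y : ZMod 4 × ZMod 4).2 = (x : ZMod 4 × ZMod 4).2 - 1)) := by decide
    intro q
    obtain ⟨x, y, h1, h2, h3⟩ := hstep q
    exact ⟨x, y, h1, h2, gammaPlus_adj_iff.mpr h3⟩
  exact ⟨4, by norm_num, cycleQuotIso (GammaPlus 4 4) L F44 (by norm_num) hfib hinv hadj hreal⟩

end Klein44
section MainCase

variable {r s : ℕ}

lemma comp_coords {g h : Equiv.Perm (XPlus r s)} {f1 f2 : ZMod r × ZMod s → ZMod r × ZMod s}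
    (hg : ∀ x : XPlus r s, ((g x : XPlus r s) : ZMod r × ZMod s) = f1 (x : ZMod r × ZMod s))
    (hh : ∀ x : XPlus r s, ((h x : XPlus r s) : ZMod r × ZMod s) = f2 (x : ZMod r × ZMod s)) :
    ∀ x : XPlus r s, (((g * h) x : XPlus r s) : ZMod r × ZMod s) =
      f1 (f2 (x : ZMod r × ZMod s)) := by
  intro x
  rw [Equiv.Perm.mul_apply, hg (h x), hh x]

lemma inv_coords {g : Equiv.Perm (XPlus r s)} {f finv : ZMod r × ZMod s → ZMod r × ZMod s}
    (hg : ∀ x : XPlus r s, ((g x : XPlus r s) : ZMod r × ZMod s) = f (x : ZMod r × ZMod s))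
    (hinv : ∀ v, finv (f v) = v) :
    ∀ y : XPlus r s, ((g⁻¹ y : XPlus r s) : ZMod r × ZMod s) = finv (y : ZMod r × ZMod s) := by
  intro y
  have h1 := hg (g⁻¹ y)
  rw [show g (g⁻¹ y) = y from by simp] at h1
  rw [h1, hinv]

lemma isBasic_main (r s : ℕ) (hre : 2 ∣ r) (hr0 : r ≠ 0) (hse : 2 ∣ s) (hs0 : s ≠ 0)
    (hfam : (r = 4 ∧ s = 4) ∨ (∃ p : ℕ, p.Prime ∧ Odd p ∧ r = 4 ∧ s = 2 * p) ∨
      (∃ p : ℕ, p.Prime ∧ Odd p ∧ r = 2 * p ∧ s = 4)) :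
    ∀ L : Subgroup (Equiv.Perm (XPlus r s)),
      NormalIn L (GPlusGroup r s hre hr0 hse hs0) → L ≠ ⊥ →
      Nat.card (Quotient (orbitSetoid L)) ≤ 2 ∨
        IsoCycle (quotientGraph (GammaPlus r s) L) := by
  intro L hN hL0
  obtain ⟨hle, hconj⟩ := hN
  classical
  have hbJ : ∀ g' ∈ L, ∃ b' : ZMod s, ∀ x : XPlus r s,
      ((g' x : XPlus r s) : ZMod r × ZMod s).2 = (x : ZMod r × ZMod s).2 + b' := by
    intro g' hg'
    obtain ⟨ε, a', b', hε, hf⟩ := affP_of_mem_GPlus hre hr0 hse hs0 (hle hg')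
    exact ⟨b', fun x => congrArg Prod.snd (hf x)⟩
  by_cases hrefl : ∃ g ∈ L, ∃ a : ZMod r, ∃ b : ZMod s, ∀ x : XPlus r s,
      ((g x : XPlus r s) : ZMod r × ZMod s) =
        (-(x : ZMod r × ZMod s).1 + a, (x : ZMod r × ZMod s).2 + b)
  · -- Case B: L contains a reflection; conjugation yields the translation (2,0).
    obtain ⟨g, hg, a, b, hgf⟩ := hrefl
    have hgf' : ∀ x : XPlus r s, ((g x : XPlus r s) : ZMod r × ZMod s) =
        (fun v : ZMod r × ZMod s => (-v.1 + a, v.2 + b)) (x : ZMod r × ZMod s) :=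
      fun x => hgf x
    have hmn : ∀ x : XPlus r s,
        ((muNuP r s hre hr0 hse hs0 x : XPlus r s) : ZMod r × ZMod s) =
        (fun v : ZMod r × ZMod s => (v.1 + 1, v.2 + 1)) (x : ZMod r × ZMod s) :=
      fun x => muNuP_apply hre hr0 hse hs0 x
    have hgi := inv_coords (f := fun v : ZMod r × ZMod s => (-v.1 + a, v.2 + b))
      (finv := fun v : ZMod r × ZMod s => (a - v.1, v.2 - b)) hgf'
      (fun v => by dsimp; exact Prod.ext (by ring) (by ring))
    have hmi := inv_coords (f := fun v : ZMod r × ZMod s => (v.1 + 1, v.2 + 1))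
      (finv := fun v : ZMod r × ZMod s => (v.1 - 1, v.2 - 1)) hmn
      (fun v => by dsimp; exact Prod.ext (by ring) (by ring))
    have hmem1 : muNuP r s hre hr0 hse hs0 * g * (muNuP r s hre hr0 hse hs0)⁻¹ ∈ L :=
      hconj _ (muNuP_mem hre hr0 hse hs0) g hg
    have hmem2 : muNuP r s hre hr0 hse hs0 * g * (muNuP r s hre hr0 hse hs0)⁻¹ * g⁻¹ ∈ L :=
      L.mul_mem hmem1 (L.inv_mem hg)
    refine lemmaJ r s hre hr0 hse hs0 L hbJ
      ⟨muNuP r s hre hr0 hse hs0 * g * (muNuP r s hre hr0 hse hs0)⁻¹ * g⁻¹, hmem2, ?_⟩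
    intro x
    rw [Equiv.Perm.mul_apply, Equiv.Perm.mul_apply, Equiv.Perm.mul_apply,
      hmn _, hgf' _, hmi _, hgi x]
    dsimp
    exact Prod.ext (by ring) (by ring)
  · -- Case A: every element of L is a translation.
    have htrans : ∀ g' ∈ L, ∃ (a : ZMod r) (b : ZMod s), ∀ x : XPlus r s,
        ((g' x : XPlus r s) : ZMod r × ZMod s) =
          ((x : ZMod r × ZMod s).1 + a, (x : ZMod r × ZMod s).2 + b) := by
      intro g' hg'
      obtain ⟨ε, a', b', hε, hf⟩ := affP_of_mem_GPlus hre hr0 hse hs0 (hle hg')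
      rcases hε with rfl | rfl
      · exact ⟨a', b', fun x => by rw [hf x]; exact Prod.ext (by dsimp; ring) rfl⟩
      · exact absurd ⟨g', hg', a', b', fun x => by
          rw [hf x]; exact Prod.ext (by dsimp; ring) rfl⟩ hrefl
    have hbI : ∀ g' ∈ L, ∃ a' : ZMod r, ∀ x : XPlus r s,
        ((g' x : XPlus r s) : ZMod r × ZMod s).1 = (x : ZMod r × ZMod s).1 + a' := by
      intro g' hg'
      obtain ⟨a', b', hf⟩ := htrans g' hg'
      exact ⟨a', fun x => congrArg Prod.fst (hf x)⟩
    -- the sigma-conjugation device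
    have hsigma : ∀ g' ∈ L, ∀ (a : ZMod r) (b : ZMod s),
        (∀ x : XPlus r s, ((g' x : XPlus r s) : ZMod r × ZMod s) =
          ((x : ZMod r × ZMod s).1 + a, (x : ZMod r × ZMod s).2 + b)) →
        (∃ u ∈ L, ∀ x : XPlus r s, ((u x : XPlus r s) : ZMod r × ZMod s) =
          ((x : ZMod r × ZMod s).1 + 2 * a, (x : ZMod r × ZMod s).2)) ∧
        (∃ u ∈ L, ∀ x : XPlus r s, ((u x : XPlus r s) : ZMod r × ZMod s) =
          ((x : ZMod r × ZMod s).1, (x : ZMod r × ZMod s).2 + 2 * b)) := by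
      intro g' hg' a b hf
      have hf' : ∀ x : XPlus r s, ((g' x : XPlus r s) : ZMod r × ZMod s) =
          (fun v : ZMod r × ZMod s => (v.1 + a, v.2 + b)) (x : ZMod r × ZMod s) :=
        fun x => hf x
      have hσf : ∀ x : XPlus r s, ((sigmaP r s hre hr0 x : XPlus r s) : ZMod r × ZMod s) =
          (fun v : ZMod r × ZMod s => (-v.1, v.2)) (x : ZMod r × ZMod s) :=
        fun x => sigmaP_apply hre hr0 x
      have hσi := inv_coords (f := fun v : ZMod r × ZMod s => (-v.1, v.2))
        (finv := fun v : ZMod r × ZMod s => (-v.1, v.2)) hσf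
        (fun v => by dsimp; exact Prod.ext (by ring) (by ring))
      have hcmem : sigmaP r s hre hr0 * g' * (sigmaP r s hre hr0)⁻¹ ∈ L :=
        hconj _ (sigmaP_mem hre hr0 hse hs0) g' hg'
      have hcf : ∀ x : XPlus r s,
          (((sigmaP r s hre hr0 * g' * (sigmaP r s hre hr0)⁻¹) x : XPlus r s) :
            ZMod r × ZMod s) =
          (fun v : ZMod r × ZMod s => (v.1 - a, v.2 + b)) (x : ZMod r × ZMod s) := by
        intro x
        rw [Equiv.Perm.mul_apply, Equiv.Perm.mul_apply, hσf _, hf' _, hσi x]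
        dsimp
        exact Prod.ext (by ring) (by ring)
      constructor
      · have hci := inv_coords (f := fun v : ZMod r × ZMod s => (v.1 - a, v.2 + b))
          (finv := fun v : ZMod r × ZMod s => (v.1 + a, v.2 - b)) hcf
          (fun v => by dsimp; exact Prod.ext (by ring) (by ring))
        refine ⟨g' * (sigmaP r s hre hr0 * g' * (sigmaP r s hre hr0)⁻¹)⁻¹,
          L.mul_mem hg' (L.inv_mem hcmem), ?_⟩
        intro x
        rw [Equiv.Perm.mul_apply, hf' _, hci x]
        dsimp
        exact Prod.ext (by ring) (by ring)
      · refine ⟨g' * (sigmaP r s hre hr0 * g' * (sigmaP r s hre hr0)⁻¹),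
          L.mul_mem hg' hcmem, ?_⟩
        intro x
        rw [Equiv.Perm.mul_apply, hf' _, hcf x]
        dsimp
        exact Prod.ext (by ring) (by ring)
    -- a nontrivial element of L
    obtain ⟨g, hg, hgne⟩ := (Subgroup.nontrivial_iff_exists_ne_one L).mp
      ((Subgroup.nontrivial_iff_ne_bot L).mpr hL0)
    obtain ⟨a, b, hgf⟩ := htrans g hg
    have hab : ¬(a = 0 ∧ b = 0) := by
      rintro ⟨rfl, rfl⟩
      apply hgne
      apply perm_ext_coord
      intro x
      rw [hgf x]
      exact Prod.ext (by dsimp; ring) (by dsimp; ring)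
    have hmem0 : ((0, 0) : ZMod r × ZMod s) ∈ XPlus r s := by
      rw [mem_XPlus_iff]; simp
    have hparab : a.val % 2 = b.val % 2 := by
      have h3 := (g ⟨(0, 0), hmem0⟩).2
      rw [mem_XPlus_iff, hgf ⟨(0, 0), hmem0⟩] at h3
      dsimp at h3
      rw [zero_add, zero_add] at h3
      exact h3
    by_cases hA : ∃ u ∈ L, ∀ x : XPlus r s, ((u x : XPlus r s) : ZMod r × ZMod s) =
        ((x : ZMod r × ZMod s).1 + 2, (x : ZMod r × ZMod s).2)
    · exact lemmaJ r s hre hr0 hse hs0 L hbJ hA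
    by_cases hB : ∃ u ∈ L, ∀ x : XPlus r s, ((u x : XPlus r s) : ZMod r × ZMod s) =
        ((x : ZMod r × ZMod s).1, (x : ZMod r × ZMod s).2 + 2)
    · exact lemmaI r s hre hr0 hse hs0 L hbI hB
    -- family-by-family analysis
    rcases hfam with ⟨rfl, rfl⟩ | ⟨p, hp, hpo, rfl, rfl⟩ | ⟨p, hp, hpo, rfl, rfl⟩
    · -- (4,4)
      have hvec : ∀ g' ∈ L, ∀ (a' : ZMod 4) (b' : ZMod 4),
          (∀ x : XPlus 4 4, ((g' x : XPlus 4 4) : ZMod 4 × ZMod 4) =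
            ((x : ZMod 4 × ZMod 4).1 + a', (x : ZMod 4 × ZMod 4).2 + b')) →
          (a' = 0 ∧ b' = 0) ∨ (a' = 2 ∧ b' = 2) := by
        intro g' hg' a' b' hf
        obtain ⟨⟨u1, hu1L, hu1⟩, ⟨u2, hu2L, hu2⟩⟩ := hsigma g' hg' a' b' hf
        have h2a : 2 * a' = 0 := by
          rcases zmod4_two_mul a' with h | h
          · exact h
          · exact absurd ⟨u1, hu1L, fun x => by rw [hu1 x, h]⟩ hA
        have h2b : 2 * b' = 0 := by
          rcases zmod4_two_mul b' with h | h
          · exact h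
          · exact absurd ⟨u2, hu2L, fun x => by rw [hu2 x, h]⟩ hB
        rcases zmod4_of_two_mul_zero a' h2a with rfl | rfl <;>
          rcases zmod4_of_two_mul_zero b' h2b with rfl | rfl
        · exact Or.inl ⟨rfl, rfl⟩
        · exact absurd ⟨g', hg', fun x => by
            rw [hf x]; exact Prod.ext (by dsimp; ring) rfl⟩ hB
        · exact absurd ⟨g', hg', fun x => by
            rw [hf x]; exact Prod.ext rfl (by dsimp; ring)⟩ hA
        · exact Or.inr ⟨rfl, rfl⟩
      right
      apply klein44 L
      · rcases hvec g hg a b hgf with ⟨rfl, rfl⟩ | ⟨rfl, rfl⟩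
        · exact absurd ⟨rfl, rfl⟩ hab
        · exact ⟨g, hg, hgf⟩
      · intro g' hg'
        obtain ⟨a', b', hf⟩ := htrans g' hg'
        rcases hvec g' hg' a' b' hf with ⟨rfl, rfl⟩ | ⟨rfl, rfl⟩
        · left
          intro x
          rw [hf x]
          exact Prod.ext (by dsimp; ring) (by dsimp; ring)
        · right
          exact hf
    · -- (4, 2p)
      exfalso
      obtain ⟨⟨u1, hu1L, hu1⟩, ⟨u2, hu2L, hu2⟩⟩ := hsigma g hg a b hgf
      have h2a : 2 * a = 0 := by
        rcases zmod4_two_mul a with h | h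
        · exact h
        · exact absurd ⟨u1, hu1L, fun x => by rw [hu1 x, h]⟩ hA
      have h2b : 2 * b = 0 := by
        by_contra h2b
        obtain ⟨k, hk⟩ := exists_mul_eq_two p hp b h2b
        have hu2' : ∀ x : XPlus 4 (2 * p), ((u2 x : XPlus 4 (2 * p)) : ZMod 4 × ZMod (2 * p)) =
            ((x : ZMod 4 × ZMod (2 * p)).1 + 0, (x : ZMod 4 × ZMod (2 * p)).2 + 2 * b) :=
          fun x => by rw [hu2 x]; exact Prod.ext (by dsimp; ring) rfl
        have hPow := transl_pow hu2' k
        refine hB ⟨u2 ^ k, L.pow_mem hu2L k, fun x => ?_⟩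
        rw [hPow x]
        exact Prod.ext (by dsimp; ring) (by dsimp; rw [hk])
      rcases zmod2p_val_cases p hp.pos b h2b with rfl | hbp
      · rcases zmod4_of_two_mul_zero a h2a with rfl | rfl
        · exact hab ⟨rfl, rfl⟩
        · exact hA ⟨g, hg, fun x => by
            rw [hgf x]; exact Prod.ext rfl (by dsimp; ring)⟩
      · have hodd : p % 2 = 1 := Nat.odd_iff.mp hpo
        have haeven : a.val % 2 = 0 := zmod4_val_even a (zmod4_of_two_mul_zero a h2a)
        omega
    · -- (2p, 4)
      exfalso
      obtain ⟨⟨u1, hu1L, hu1⟩, ⟨u2, hu2L, hu2⟩⟩ := hsigma g hg a b hgf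
      have h2b : 2 * b = 0 := by
        rcases zmod4_two_mul b with h | h
        · exact h
        · exact absurd ⟨u2, hu2L, fun x => by rw [hu2 x, h]⟩ hB
      have h2a : 2 * a = 0 := by
        by_contra h2a
        obtain ⟨k, hk⟩ := exists_mul_eq_two p hp a h2a
        have hu1' : ∀ x : XPlus (2 * p) 4, ((u1 x : XPlus (2 * p) 4) : ZMod (2 * p) × ZMod 4) =
            ((x : ZMod (2 * p) × ZMod 4).1 + 2 * a, (x : ZMod (2 * p) × ZMod 4).2 + 0) :=
          fun x => by rw [hu1 x]; exact Prod.ext rfl (by dsimp; ring)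
        have hPow := transl_pow hu1' k
        refine hA ⟨u1 ^ k, L.pow_mem hu1L k, fun x => ?_⟩
        rw [hPow x]
        exact Prod.ext (by dsimp; rw [hk]) (by dsimp; ring)
      rcases zmod2p_val_cases p hp.pos a h2a with rfl | hap
      · rcases zmod4_of_two_mul_zero b h2b with rfl | rfl
        · exact hab ⟨rfl, rfl⟩
        · exact hB ⟨g, hg, fun x => by
            rw [hgf x]; exact Prod.ext (by dsimp; ring) rfl⟩
      · have hodd : p % 2 = 1 := Nat.odd_iff.mp hpo
        have hbeven : b.val % 2 = 0 := zmod4_val_even b (zmod4_of_two_mul_zero b h2b)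
        omega

end MainCase
/-- for `(r,s)` of the form `(4,4)`, `(4,2p)` or `(2p,4)` with `p` an odd prime,
every normal quotient of `(Γ⁺(r,s), G⁺(r,s))` by a nontrivial normal subgroup is degenerate,
the quotient by `⟨ν²⟩` is `C_r`, the quotient by `⟨μ²⟩` is `C_s`, and the pair is basic of
cycle type. -/
theorem stmt6 (r s : ℕ) (hre : 2 ∣ r) (hr0 : r ≠ 0) (hse : 2 ∣ s) (hs0 : s ≠ 0)
    (h : (r = 4 ∧ s = 4) ∨ (∃ p : ℕ, p.Prime ∧ Odd p ∧ r = 4 ∧ s = 2 * p) ∨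
      (∃ p : ℕ, p.Prime ∧ Odd p ∧ r = 2 * p ∧ s = 4)) :
    (∀ L : Subgroup (Equiv.Perm (XPlus r s)),
      NormalIn L (GPlusGroup r s hre hr0 hse hs0) → L ≠ ⊥ →
      Nat.card (Quotient (orbitSetoid L)) ≤ 2 ∨ IsoCycle (quotientGraph (GammaPlus r s) L)) ∧
    Nonempty (quotientGraph (GammaPlus r s) (Subgroup.closure {nuSqP r s hse hs0}) ≃g
      SimpleGraph.cycleGraph r) ∧
    Nonempty (quotientGraph (GammaPlus r s) (Subgroup.closure {muSqP r s hre hr0}) ≃g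
      SimpleGraph.cycleGraph s) ∧
    BasicOfCycleType (GammaPlus r s) (GPlusGroup r s hre hr0 hse hs0) := by
  have hr3 : 3 ≤ r := by
    rcases h with ⟨rfl, rfl⟩ | ⟨p, hp, hpo, rfl, rfl⟩ | ⟨p, hp, hpo, rfl, rfl⟩
    · norm_num
    · norm_num
    · have := hp.two_le; omega
  have hs3 : 3 ≤ s := by
    rcases h with ⟨rfl, rfl⟩ | ⟨p, hp, hpo, rfl, rfl⟩ | ⟨p, hp, hpo, rfl, rfl⟩
    · norm_num
    · have := hp.two_le; omega
    · norm_num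
  refine ⟨isBasic_main r s hre hr0 hse hs0 h,
    nuSq_quot_iso r s hre hr0 hse hs0 hr3,
    muSq_quot_iso r s hre hr0 hse hs0 hs3,
    isBasic_main r s hre hr0 hse hs0 h,
    Subgroup.closure {nuSqP r s hse hs0},
    nuSq_normalIn hre hr0 hse hs0,
    nuSq_ne_bot hre hr0 hse hs0 hs3,
    r, hr3, nuSq_quot_iso r s hre hr0 hse hs0 hr3⟩

end OG4
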